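/- arXiv:2603.08576 — 5 statements merged into one kernel-verified Lean document; each statement's English description precedes it below -/
import Mathlib

section
/- For every a > 0, the set M*_a := {w ∈ C([0,a],ℝ) : w(0) = 0 and ρ(w) = a} is a Borel subset of C([0,a],ℝ). -/
open Set Filter MeasureTheory Topology UniformConvergence

noncomputable section

/-- Supremum of `f` over the interval `[s,t]`. -/
def maxOnIcc (f : ℝ → ℝ) (s t : ℝ) : ℝ := sSup (f '' Set.Icc s t)

/-- Infimum of `f` over the interval `[s,t]`. -/
def minOnIcc (f : ℝ → ℝ) (s t : ℝ) : ℝ := sInf (f '' Set.Icc s t)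

/-- `ρ(w)`: the first time in `[0,a]` at which `f` attains its maximum over `[0,a]`. -/
def rho (a : ℝ) (f : ℝ → ℝ) : ℝ := sInf {s | s ∈ Set.Icc 0 a ∧ f s = maxOnIcc f 0 a}

/-- membership in `B_a`: continuous bridges of length `a`. -/
def IsBridge (a : ℝ) (f : ℝ → ℝ) : Prop :=
  ContinuousOn f (Set.Icc 0 a) ∧ f 0 = 0 ∧ f a = 0

/-- membership in `B*_a`: bridges whose maximum is attained at a unique point. -/
def IsBridgeStar (a : ℝ) (f : ℝ → ℝ) : Prop :=
  IsBridge a f ∧ ∃! s, s ∈ Set.Icc 0 a ∧ ∀ u ∈ Set.Icc 0 a, f u ≤ f s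

/-- membership in `M_a`. -/
def IsMeander (a : ℝ) (f : ℝ → ℝ) : Prop :=
  ContinuousOn f (Set.Icc 0 a) ∧ f 0 = 0 ∧ ∀ s ∈ Set.Icc 0 a, f s ≤ f a

/-- membership in `M*_a`. -/
def IsMeanderStar (a : ℝ) (f : ℝ → ℝ) : Prop :=
  ContinuousOn f (Set.Icc 0 a) ∧ f 0 = 0 ∧ rho a f = a

/-- The transformation `T^me_a`. -/
def Tme (a : ℝ) (f : ℝ → ℝ) : ℝ → ℝ := fun t =>
  if t ≤ rho a f then f t else f (rho a f) + f (a + rho a f - t)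

/-- `γ_{f(a)/2}`: the first time in `[0,a]` at which `f` hits the level `f(a)/2`. -/
def gammaHalf (a : ℝ) (f : ℝ → ℝ) : ℝ := sInf {s | s ∈ Set.Icc 0 a ∧ f s = f a / 2}

/-- The transformation `T^br_a`. -/
def Tbr (a : ℝ) (f : ℝ → ℝ) : ℝ → ℝ := fun t =>
  if t ≤ gammaHalf a f then f t else f (a + gammaHalf a f - t) - f (gammaHalf a f)

/-- The Brownian scaling map `S_b`. -/
def scaleMap (b : ℝ) (f : ℝ → ℝ) : ℝ → ℝ := fun t => (Real.sqrt b)⁻¹ * f (b * t)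

/-- `m^br_t(w)` (for bridges of length `1`). -/
def mbr (f : ℝ → ℝ) (t : ℝ) : ℝ := if t ≤ rho 1 f then maxOnIcc f 0 t else maxOnIcc f t 1

/-- `g^br_t(w)`: left endpoint of the excursion of `m^br(w) - w` straddling `t`. -/
def gbr (f : ℝ → ℝ) (t : ℝ) : ℝ := sSup {s | s ∈ Set.Icc 0 t ∧ mbr f s - f s = 0}

/-- `d^br_t(w)`: right endpoint of the excursion of `m^br(w) - w` straddling `t`,
with the convention `d^br_1(w) = 1`. -/
def dbr (f : ℝ → ℝ) (t : ℝ) : ℝ :=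
  if t = 1 then 1 else sInf {s | s ∈ Set.Ioc t 1 ∧ mbr f s - f s = 0}

/-- `r^br_t(w)`: maximum of `m^br(w) - w` over the excursion interval. -/
def rbr (f : ℝ → ℝ) (t : ℝ) : ℝ :=
  sSup ((fun s => mbr f s - f s) '' Set.Icc (gbr f t) (dbr f t))

/-- `u^br_t(w)`: Lebesgue time spent, up to time `t`, in non-excised excursions. -/
def ubr (f : ℝ → ℝ) (t : ℝ) : ℝ := ∫ s in (0:ℝ)..t, if rbr f s < mbr f s then (1:ℝ) else 0

/-- `α^br_s(w)`, with the convention `α^br_{u^br_1(w)}(w) = 1`. -/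
def abr (f : ℝ → ℝ) (s : ℝ) : ℝ :=
  if s = ubr f 1 then 1 else sInf {t | t ∈ Set.Icc (0:ℝ) 1 ∧ s < ubr f t}

/-- `H^br(w)` (as a function; it is relevant on `[0, u^br_1(w)]`). -/
def Hbr (f : ℝ → ℝ) : ℝ → ℝ := fun t => f (abr f t)

/-- `G^br(w)`. -/
def Gbr (f : ℝ → ℝ) : ℝ → ℝ := if 0 < ubr f 1 then scaleMap (ubr f 1) (Hbr f) else 0

/-- the past-maximum function `w̄`. -/
def pastMax (f : ℝ → ℝ) (t : ℝ) : ℝ := maxOnIcc f 0 t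

/-- `g^me_t(w)`. -/
def gme (f : ℝ → ℝ) (t : ℝ) : ℝ := sSup {s | s ∈ Set.Icc 0 t ∧ pastMax f s - f s = 0}

/-- `d^me_t(w)`, with the convention `d^me_1(w) = 1`. -/
def dme (f : ℝ → ℝ) (t : ℝ) : ℝ :=
  if t = 1 then 1 else sInf {s | s ∈ Set.Ioc t 1 ∧ pastMax f s - f s = 0}

/-- `r^me_t(w)`. -/
def rme (f : ℝ → ℝ) (t : ℝ) : ℝ :=
  sSup ((fun s => pastMax f s - f s) '' Set.Icc (gme f t) (dme f t))

/-- `u^me_t(w)`. -/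
def ume (f : ℝ → ℝ) (t : ℝ) : ℝ :=
  if t ≤ gammaHalf 1 f then ∫ s in (0:ℝ)..t, if rme f s < pastMax f s then (1:ℝ) else 0
  else (∫ s in (0:ℝ)..gammaHalf 1 f, if rme f s < pastMax f s then (1:ℝ) else 0) +
    ∫ s in gammaHalf 1 f..t, if rme f s < pastMax f s - f 1 / 2 then (1:ℝ) else 0

/-- `α^me_s(w)`, with the convention `α^me_{u^me_1(w)}(w) = 1`. -/
def ame (f : ℝ → ℝ) (s : ℝ) : ℝ :=
  if s = ume f 1 then 1 else sInf {t | t ∈ Set.Icc (0:ℝ) 1 ∧ s < ume f t}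

/-- `H^me(w)`. -/
def Hme (f : ℝ → ℝ) : ℝ → ℝ := fun t => f (ame f t)

/-- `G^me(w)`. -/
def Gme (f : ℝ → ℝ) : ℝ → ℝ := if 0 < ume f 1 then scaleMap (ume f 1) (Hme f) else 0

/-- Regularity property (i): uniqueness of one-sided maximizers at rational times. -/
def UniqueOneSidedMax (f : ℝ → ℝ) : Prop :=
  ∀ t : ℚ, (t : ℝ) ∈ Set.Icc (0:ℝ) 1 →
    (∃! s, s ∈ Set.Icc (0:ℝ) (t:ℝ) ∧ ∀ u ∈ Set.Icc (0:ℝ) (t:ℝ), f u ≤ f s) ∧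
    (∃! s, s ∈ Set.Icc ((t:ℝ)) 1 ∧ ∀ u ∈ Set.Icc ((t:ℝ)) 1, f u ≤ f s)

/-- Regularity property (ii): the level `0` is not a strict local minimum of `f` on `[0,1]`. -/
def NoStrictLocalMinAtZero (f : ℝ → ℝ) : Prop :=
  ¬ ∃ t ∈ Set.Icc (0:ℝ) 1, f t = 0 ∧
      ∃ δ > 0, ∀ s ∈ Set.Icc (0:ℝ) 1, s ≠ t → |s - t| < δ → f t < f s

/-- `w ∈ B^reg_1`. -/
def Regular (f : ℝ → ℝ) : Prop :=
  IsBridge 1 f ∧ UniqueOneSidedMax f ∧ NoStrictLocalMinAtZero f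


-- Auxiliary lemmas for stmt4

lemma rho_eq_right_iff {a : ℝ} (ha : 0 < a) {f : ℝ → ℝ}
    (hf : ContinuousOn f (Set.Icc 0 a)) :
    rho a f = a ↔ ∀ s ∈ Set.Ico (0:ℝ) a, f s < f a := by
  have hcpt : IsCompact (Set.Icc (0:ℝ) a) := isCompact_Icc
  have hne : (Set.Icc (0:ℝ) a).Nonempty := ⟨0, le_refl _, ha.le⟩
  obtain ⟨s₀, hs₀, hmax⟩ := hcpt.exists_isMaxOn hne hf
  have hbdd : BddAbove (f '' Set.Icc 0 a) := (hcpt.image_of_continuousOn hf).bddAbove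
  have hM : maxOnIcc f 0 a = f s₀ := by
    apply IsGreatest.csSup_eq
    exact ⟨⟨s₀, hs₀, rfl⟩, by rintro _ ⟨u, hu, rfl⟩; exact hmax hu⟩
  constructor
  · intro h s hs
    have hbb : BddBelow {s | s ∈ Set.Icc 0 a ∧ f s = maxOnIcc f 0 a} :=
      ⟨0, fun x hx => hx.1.1⟩
    have hs₀a : s₀ = a := le_antisymm hs₀.2 (by
      have := csInf_le hbb (show s₀ ∈ _ from ⟨hs₀, hM.symm⟩)
      rw [rho] at h; linarith)
    by_contra hlt
    push_neg at hlt
    have hfs : f s = maxOnIcc f 0 a := by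
      have h1 : f s ≤ f s₀ := hmax ⟨hs.1, hs.2.le⟩
      rw [hM]
      rw [hs₀a] at h1 ⊢
      linarith
    have := csInf_le (show BddBelow _ from ⟨0, fun x hx => hx.1.1⟩)
      (show s ∈ {s | s ∈ Set.Icc 0 a ∧ f s = maxOnIcc f 0 a} from ⟨⟨hs.1, hs.2.le⟩, hfs⟩)
    rw [rho] at h
    linarith [hs.2]
  · intro h
    have hMa : maxOnIcc f 0 a = f a := by
      apply IsGreatest.csSup_eq
      constructor
      · exact ⟨a, ⟨ha.le, le_refl _⟩, rfl⟩
      · rintro _ ⟨u, hu, rfl⟩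
        rcases lt_or_eq_of_le hu.2 with hlt | heq
        · exact (h u ⟨hu.1, hlt⟩).le
        · rw [heq]
    have hSeq : {s | s ∈ Set.Icc 0 a ∧ f s = maxOnIcc f 0 a} = {a} := by
      ext s
      simp only [Set.mem_setOf_eq, Set.mem_singleton_iff]
      constructor
      · rintro ⟨hs, hfs⟩
        rcases lt_or_eq_of_le hs.2 with hlt | heq
        · exact absurd hfs (by rw [hMa]; exact (h s ⟨hs.1, hlt⟩).ne)
        · exact heq
      · rintro rfl
        exact ⟨⟨ha.le, le_refl _⟩, hMa.symm⟩
    rw [rho, hSeq, csInf_singleton]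

lemma strict_iff_rat {a : ℝ} (ha : 0 < a) {f : ℝ → ℝ}
    (hf : ContinuousOn f (Set.Icc 0 a)) :
    (∀ s ∈ Set.Ico (0:ℝ) a, f s < f a) ↔
      ∀ q : ℚ, 0 < (q:ℝ) → (q:ℝ) < a → maxOnIcc f 0 (q:ℝ) < f a := by
  constructor
  · intro h q hq0 hqa
    have hsub : Set.Icc (0:ℝ) (q:ℝ) ⊆ Set.Icc 0 a := Set.Icc_subset_Icc_right hqa.le
    obtain ⟨s₀, hs₀, hmax⟩ := isCompact_Icc.exists_isMaxOn ⟨0, le_refl _, hq0.le⟩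
      (hf.mono hsub)
    have hM : maxOnIcc f 0 (q:ℝ) = f s₀ := by
      apply IsGreatest.csSup_eq
      exact ⟨⟨s₀, hs₀, rfl⟩, by rintro _ ⟨u, hu, rfl⟩; exact hmax hu⟩
    rw [hM]
    exact h s₀ ⟨hs₀.1, lt_of_le_of_lt hs₀.2 hqa⟩
  · intro h s hs
    obtain ⟨q, hq1, hq2⟩ := exists_rat_btwn hs.2
    have hq0 : 0 < (q:ℝ) := lt_of_le_of_lt hs.1 hq1
    have hsub : Set.Icc (0:ℝ) (q:ℝ) ⊆ Set.Icc 0 a := Set.Icc_subset_Icc_right hq2.le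
    have hbdd : BddAbove (f '' Set.Icc (0:ℝ) (q:ℝ)) :=
      (isCompact_Icc.image_of_continuousOn (hf.mono hsub)).bddAbove
    have : f s ≤ maxOnIcc f 0 (q:ℝ) := le_csSup hbdd ⟨s, ⟨hs.1, hq1.le⟩, rfl⟩
    exact lt_of_le_of_lt this (h q hq0 hq2)

lemma continuous_supOn {a : ℝ} (K : Set (Set.Icc (0:ℝ) a)) (hK : IsCompact K)
    (hne : K.Nonempty) :
    Continuous (fun w : C(Set.Icc (0:ℝ) a, ℝ) => sSup (⇑w '' K)) := by
  have key : ∀ w v : C(Set.Icc (0:ℝ) a, ℝ),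
      sSup (⇑w '' K) - sSup (⇑v '' K) ≤ dist w v := by
    intro w v
    rw [sub_le_iff_le_add]
    apply csSup_le (hne.image _)
    rintro _ ⟨x, hx, rfl⟩
    have h1 : w x - v x ≤ dist w v := by
      have := ContinuousMap.dist_apply_le_dist (f := w) (g := v) x
      rw [Real.dist_eq] at this
      linarith [(abs_le.mp this).2]
    have h2 : v x ≤ sSup (⇑v '' K) :=
      le_csSup ((hK.image v.continuous).bddAbove) ⟨x, hx, rfl⟩
    linarith
  have hlip : LipschitzWith 1 (fun w : C(Set.Icc (0:ℝ) a, ℝ) => sSup (⇑w '' K)) := by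
    apply LipschitzWith.of_dist_le_mul
    intro w v
    rw [NNReal.coe_one, one_mul, Real.dist_eq, abs_sub_le_iff]
    exact ⟨key w v, by rw [dist_comm]; exact key v w⟩
  exact hlip.continuous

/-- `M*_a` is a Borel subset of `C([0,a],ℝ)`. -/
theorem stmt4 (a : ℝ) (ha : 0 < a) :
    MeasurableSet[borel C(Set.Icc (0:ℝ) a, ℝ)]
      {w : C(Set.Icc (0:ℝ) a, ℝ) | IsMeanderStar a (Set.IccExtend ha.le ⇑w)} := by
  letI : MeasurableSpace C(Set.Icc (0:ℝ) a, ℝ) := borel _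
  haveI : BorelSpace C(Set.Icc (0:ℝ) a, ℝ) := ⟨rfl⟩
  have h0 : (0:ℝ) ∈ Set.Icc (0:ℝ) a := ⟨le_refl _, ha.le⟩
  have hA : a ∈ Set.Icc (0:ℝ) a := ⟨ha.le, le_refl _⟩
  have hset : {w : C(Set.Icc (0:ℝ) a, ℝ) | IsMeanderStar a (Set.IccExtend ha.le ⇑w)} =
      {w : C(Set.Icc (0:ℝ) a, ℝ) | w ⟨0, h0⟩ = 0} ∩
      ⋂ (q : ℚ), {w : C(Set.Icc (0:ℝ) a, ℝ) |
        0 < (q:ℝ) ∧ (q:ℝ) < a →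
          sSup (⇑w '' (Set.projIcc 0 a ha.le '' Set.Icc 0 (q:ℝ))) < w ⟨a, hA⟩} := by
    ext w
    set f : ℝ → ℝ := Set.IccExtend ha.le ⇑w with hf
    have hfc : Continuous f := w.continuous.Icc_extend'
    have hf0 : f 0 = w ⟨0, h0⟩ := Set.IccExtend_of_mem ha.le ⇑w h0
    have hfa : f a = w ⟨a, hA⟩ := Set.IccExtend_of_mem ha.le ⇑w hA
    have himg : ∀ q : ℝ, f '' Set.Icc 0 q = ⇑w '' (Set.projIcc 0 a ha.le '' Set.Icc 0 q) := by
      intro q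
      rw [hf, Set.IccExtend, Set.image_comp]
    simp only [Set.mem_setOf_eq, Set.mem_inter_iff, Set.mem_iInter, IsMeanderStar]
    constructor
    · rintro ⟨-, hw0, hrho⟩
      have hstrict := (rho_eq_right_iff ha hfc.continuousOn).mp hrho
      have hrat := (strict_iff_rat ha hfc.continuousOn).mp hstrict
      refine ⟨by rw [← hf0]; exact hw0, fun q hq => ?_⟩
      have := hrat q hq.1 hq.2
      rwa [maxOnIcc, himg, hfa] at this
    · rintro ⟨hw0, hq⟩
      refine ⟨hfc.continuousOn, by show f 0 = 0; rw [hf0]; exact hw0, ?_⟩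
      rw [rho_eq_right_iff ha hfc.continuousOn, strict_iff_rat ha hfc.continuousOn]
      intro q hq0 hqa
      have := hq q ⟨hq0, hqa⟩
      rwa [maxOnIcc, himg, hfa]
  rw [hset]
  apply MeasurableSet.inter
  · exact (isClosed_eq (continuous_eval_const _) continuous_const).measurableSet
  · apply MeasurableSet.iInter
    intro q
    by_cases hq : 0 < (q:ℝ) ∧ (q:ℝ) < a
    · have heq : {w : C(Set.Icc (0:ℝ) a, ℝ) |
          0 < (q:ℝ) ∧ (q:ℝ) < a →
            sSup (⇑w '' (Set.projIcc 0 a ha.le '' Set.Icc 0 (q:ℝ))) < w ⟨a, hA⟩} =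
          {w : C(Set.Icc (0:ℝ) a, ℝ) |
            sSup (⇑w '' (Set.projIcc 0 a ha.le '' Set.Icc 0 (q:ℝ))) < w ⟨a, hA⟩} := by
        ext w; simp [hq]
      rw [heq]
      have hcont := continuous_supOn (Set.projIcc 0 a ha.le '' Set.Icc 0 (q:ℝ))
        (isCompact_Icc.image (continuous_projIcc))
        (Set.Nonempty.image _ ⟨0, le_refl _, hq.1.le⟩)
      exact (isOpen_lt hcont (continuous_eval_const _)).measurableSet
    · have heq : {w : C(Set.Icc (0:ℝ) a, ℝ) |
          0 < (q:ℝ) ∧ (q:ℝ) < a →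
            sSup (⇑w '' (Set.projIcc 0 a ha.le '' Set.Icc 0 (q:ℝ))) < w ⟨a, hA⟩} =
          Set.univ := by
        ext w; simp only [Set.mem_setOf_eq, Set.mem_univ, iff_true]
        intro hc; exact absurd hc hq
      rw [heq]
      exact MeasurableSet.univ
end
end

section
/- The set B^reg_1 of regular bridges is a Borel subset of C([0,1],ℝ). -/
open Set Filter MeasureTheory Topology UniformConvergence

noncomputable section

namespace Stmt10Aux

abbrev CC := C(Set.Icc (0:ℝ) 1, ℝ)

def F (w : CC) : ℝ → ℝ := Set.IccExtend zero_le_one ⇑w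

lemma continuous_F (w : CC) : Continuous (F w) := w.continuous.comp continuous_projIcc

lemma dist_F_le (w w' : CC) (x : ℝ) : |F w x - F w' x| ≤ dist w w' := by
  have := ContinuousMap.dist_apply_le_dist (f := w) (g := w') (projIcc 0 1 zero_le_one x)
  simpa [F, Set.IccExtend, Real.dist_eq] using this

lemma bddAbove_F (w : CC) (c d : ℝ) : BddAbove (F w '' Icc c d) :=
  (isCompact_Icc.image (continuous_F w)).bddAbove

lemma bddBelow_F (w : CC) (c d : ℝ) : BddBelow (F w '' Icc c d) :=
  (isCompact_Icc.image (continuous_F w)).bddBelow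

lemma abs_csSup_sub_csSup_le {s : Set ℝ} (hs : s.Nonempty) {f g : ℝ → ℝ}
    (hf : BddAbove (f '' s)) (hg : BddAbove (g '' s)) {ε : ℝ}
    (h : ∀ x ∈ s, |f x - g x| ≤ ε) :
    |sSup (f '' s) - sSup (g '' s)| ≤ ε := by
  rw [abs_sub_le_iff]
  constructor
  · rw [sub_le_iff_le_add]
    apply csSup_le (hs.image f)
    rintro y ⟨x, hx, rfl⟩
    have h1 := (abs_sub_le_iff.mp (h x hx)).1
    have h2 : g x ≤ sSup (g '' s) := le_csSup hg ⟨x, hx, rfl⟩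
    linarith
  · rw [sub_le_iff_le_add]
    apply csSup_le (hs.image g)
    rintro y ⟨x, hx, rfl⟩
    have h1 := (abs_sub_le_iff.mp (h x hx)).2
    have h2 : f x ≤ sSup (f '' s) := le_csSup hf ⟨x, hx, rfl⟩
    linarith

lemma abs_csInf_sub_csInf_le {s : Set ℝ} (hs : s.Nonempty) {f g : ℝ → ℝ}
    (hf : BddBelow (f '' s)) (hg : BddBelow (g '' s)) {ε : ℝ}
    (h : ∀ x ∈ s, |f x - g x| ≤ ε) :
    |sInf (f '' s) - sInf (g '' s)| ≤ ε := by
  rw [abs_sub_le_iff]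
  constructor
  · have : sInf (f '' s) - ε ≤ sInf (g '' s) := by
      apply le_csInf (hs.image g)
      rintro y ⟨x, hx, rfl⟩
      have h1 := (abs_sub_le_iff.mp (h x hx)).1
      have h2 : sInf (f '' s) ≤ f x := csInf_le hf ⟨x, hx, rfl⟩
      linarith
    linarith
  · have : sInf (g '' s) - ε ≤ sInf (f '' s) := by
      apply le_csInf (hs.image f)
      rintro y ⟨x, hx, rfl⟩
      have h1 := (abs_sub_le_iff.mp (h x hx)).2
      have h2 : sInf (g '' s) ≤ g x := csInf_le hg ⟨x, hx, rfl⟩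
      linarith
    linarith

lemma continuous_maxOnF {c d : ℝ} (h : c ≤ d) :
    Continuous (fun w : CC => maxOnIcc (F w) c d) := by
  rw [Metric.continuous_iff]
  intro w ε hε
  refine ⟨ε, hε, fun w' hw' => ?_⟩
  rw [Real.dist_eq]
  calc |maxOnIcc (F w') c d - maxOnIcc (F w) c d|
      ≤ dist w' w := abs_csSup_sub_csSup_le (nonempty_Icc.2 h)
        (bddAbove_F w' c d) (bddAbove_F w c d) (fun x _ => dist_F_le w' w x)
    _ < ε := hw'

lemma continuous_minOnF {c d : ℝ} (h : c ≤ d) :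
    Continuous (fun w : CC => minOnIcc (F w) c d) := by
  rw [Metric.continuous_iff]
  intro w ε hε
  refine ⟨ε, hε, fun w' hw' => ?_⟩
  rw [Real.dist_eq]
  calc |minOnIcc (F w') c d - minOnIcc (F w) c d|
      ≤ dist w' w := abs_csInf_sub_csInf_le (nonempty_Icc.2 h)
        (bddBelow_F w' c d) (bddBelow_F w c d) (fun x _ => dist_F_le w' w x)
    _ < ε := hw'

/-- maxOnIcc attained. -/
lemma exists_maxOn {f : ℝ → ℝ} (hf : Continuous f) {c d : ℝ} (h : c ≤ d) :
    ∃ s ∈ Icc c d, (∀ u ∈ Icc c d, f u ≤ f s) ∧ maxOnIcc f c d = f s := by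
  obtain ⟨s, hs, hmax⟩ := isCompact_Icc.exists_isMaxOn (nonempty_Icc.2 h) hf.continuousOn
  have hmax' : ∀ u ∈ Icc c d, f u ≤ f s := fun u hu => hmax hu
  refine ⟨s, hs, hmax', IsGreatest.csSup_eq ⟨⟨s, hs, rfl⟩, ?_⟩⟩
  rintro y ⟨x, hx, rfl⟩
  exact hmax' x hx

lemma exists_minOn {f : ℝ → ℝ} (hf : Continuous f) {c d : ℝ} (h : c ≤ d) :
    ∃ s ∈ Icc c d, (∀ u ∈ Icc c d, f s ≤ f u) ∧ minOnIcc f c d = f s := by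
  obtain ⟨s, hs, hmin⟩ := isCompact_Icc.exists_isMinOn (nonempty_Icc.2 h) hf.continuousOn
  have hmin' : ∀ u ∈ Icc c d, f s ≤ f u := fun u hu => hmin hu
  refine ⟨s, hs, hmin', IsLeast.csInf_eq ⟨⟨s, hs, rfl⟩, ?_⟩⟩
  rintro y ⟨x, hx, rfl⟩
  exact hmin' x hx

lemma uniqueMax_iff {f : ℝ → ℝ} (hf : Continuous f) {c d : ℝ} (hcd : c ≤ d) :
    (∃! s, s ∈ Icc c d ∧ ∀ u ∈ Icc c d, f u ≤ f s) ↔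
    ∀ p q : ℚ, c ≤ (p:ℝ) → (p:ℝ) < (q:ℝ) → (q:ℝ) ≤ d →
      ¬(maxOnIcc f c p = maxOnIcc f c d ∧ maxOnIcc f q d = maxOnIcc f c d) := by
  constructor
  · rintro ⟨s, _, huniq⟩ p q hcp hpq hqd ⟨h1, h2⟩
    obtain ⟨s1, hs1, hmax1, heq1⟩ := exists_maxOn hf hcp
    obtain ⟨s2, hs2, hmax2, heq2⟩ := exists_maxOn hf hqd
    have hpd : (p:ℝ) ≤ d := le_trans hpq.le hqd
    have hcq : c ≤ (q:ℝ) := le_trans hcp hpq.le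
    have hglob1 : ∀ u ∈ Icc c d, f u ≤ f s1 := by
      intro u hu
      have : f u ≤ maxOnIcc f c d := le_csSup (isCompact_Icc.image hf).bddAbove ⟨u, hu, rfl⟩
      rw [← h1, heq1] at this; exact this
    have hglob2 : ∀ u ∈ Icc c d, f u ≤ f s2 := by
      intro u hu
      have : f u ≤ maxOnIcc f c d := le_csSup (isCompact_Icc.image hf).bddAbove ⟨u, hu, rfl⟩
      rw [← h2, heq2] at this; exact this
    have e1 : s1 = s := huniq s1 ⟨⟨hs1.1, le_trans hs1.2 hpd⟩, hglob1⟩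
    have e2 : s2 = s := huniq s2 ⟨⟨le_trans hcq hs2.1, hs2.2⟩, hglob2⟩
    have : s1 < s2 := lt_of_le_of_lt hs1.2 (lt_of_lt_of_le hpq hs2.1)
    rw [e1, e2] at this; exact lt_irrefl s this
  · intro hR
    obtain ⟨s, hs, hmax, heq⟩ := exists_maxOn hf hcd
    refine ⟨s, ⟨hs, hmax⟩, ?_⟩
    have key : ∀ s1 s2, (s1 ∈ Icc c d ∧ ∀ u ∈ Icc c d, f u ≤ f s1) →
        (s2 ∈ Icc c d ∧ ∀ u ∈ Icc c d, f u ≤ f s2) → s1 < s2 → False := by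
      rintro s1 s2 ⟨hs1, hmax1⟩ ⟨hs2, hmax2⟩ hlt
      obtain ⟨p, hp1, hp2⟩ := exists_rat_btwn hlt
      obtain ⟨q, hq1, hq2⟩ := exists_rat_btwn hp2
      have hcp : c ≤ (p:ℝ) := le_trans hs1.1 hp1.le
      have hqd : (q:ℝ) ≤ d := le_trans hq2.le hs2.2
      have hpd : (p:ℝ) ≤ d := le_trans hq1.le hqd
      have hcq : c ≤ (q:ℝ) := le_trans hcp hq1.le
      have hM1 : f s1 = maxOnIcc f c d := by
        have := hmax s1 hs1
        have := hmax1 s hs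
        rw [heq]; linarith
      have hM2 : f s2 = maxOnIcc f c d := by
        have := hmax s2 hs2
        have := hmax2 s hs
        rw [heq]; linarith
      apply hR p q hcp hq1 hqd
      constructor
      · apply le_antisymm
        · exact csSup_le_csSup (isCompact_Icc.image hf).bddAbove
            ⟨f s1, s1, ⟨hs1.1, hp1.le⟩, rfl⟩ (image_mono (f := f) (Icc_subset_Icc le_rfl hpd))
        · rw [← hM1]
          exact le_csSup (isCompact_Icc.image hf).bddAbove ⟨s1, ⟨hs1.1, hp1.le⟩, rfl⟩
      · apply le_antisymm
        · exact csSup_le_csSup (isCompact_Icc.image hf).bddAbove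
            ⟨f s2, s2, ⟨hq2.le, hs2.2⟩, rfl⟩ (image_mono (f := f) (Icc_subset_Icc hcq le_rfl))
        · rw [← hM2]
          exact le_csSup (isCompact_Icc.image hf).bddAbove ⟨s2, ⟨hq2.le, hs2.2⟩, rfl⟩
    intro y hy
    rcases lt_trichotomy y s with h | h | h
    · exact absurd (key y s hy ⟨hs, hmax⟩ h) (not_false)
    · exact h
    · exact absurd (key s y ⟨hs, hmax⟩ hy h) (not_false)


lemma uniqueMin_iff {f : ℝ → ℝ} (hf : Continuous f) {c d : ℝ} (hcd : c ≤ d) :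
    (∃! s, s ∈ Icc c d ∧ ∀ u ∈ Icc c d, f s ≤ f u) ↔
    ∀ p q : ℚ, c ≤ (p:ℝ) → (p:ℝ) < (q:ℝ) → (q:ℝ) ≤ d →
      ¬(minOnIcc f c p = minOnIcc f c d ∧ minOnIcc f q d = minOnIcc f c d) := by
  constructor
  · rintro ⟨s, _, huniq⟩ p q hcp hpq hqd ⟨h1, h2⟩
    obtain ⟨s1, hs1, hmin1, heq1⟩ := exists_minOn hf hcp
    obtain ⟨s2, hs2, hmin2, heq2⟩ := exists_minOn hf hqd
    have hpd : (p:ℝ) ≤ d := le_trans hpq.le hqd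
    have hcq : c ≤ (q:ℝ) := le_trans hcp hpq.le
    have hglob1 : ∀ u ∈ Icc c d, f s1 ≤ f u := by
      intro u hu
      have : minOnIcc f c d ≤ f u := csInf_le (isCompact_Icc.image hf).bddBelow ⟨u, hu, rfl⟩
      rw [← h1, heq1] at this; exact this
    have hglob2 : ∀ u ∈ Icc c d, f s2 ≤ f u := by
      intro u hu
      have : minOnIcc f c d ≤ f u := csInf_le (isCompact_Icc.image hf).bddBelow ⟨u, hu, rfl⟩
      rw [← h2, heq2] at this; exact this
    have e1 : s1 = s := huniq s1 ⟨⟨hs1.1, le_trans hs1.2 hpd⟩, hglob1⟩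
    have e2 : s2 = s := huniq s2 ⟨⟨le_trans hcq hs2.1, hs2.2⟩, hglob2⟩
    have : s1 < s2 := lt_of_le_of_lt hs1.2 (lt_of_lt_of_le hpq hs2.1)
    rw [e1, e2] at this; exact lt_irrefl s this
  · intro hR
    obtain ⟨s, hs, hmin, heq⟩ := exists_minOn hf hcd
    refine ⟨s, ⟨hs, hmin⟩, ?_⟩
    have key : ∀ s1 s2, (s1 ∈ Icc c d ∧ ∀ u ∈ Icc c d, f s1 ≤ f u) →
        (s2 ∈ Icc c d ∧ ∀ u ∈ Icc c d, f s2 ≤ f u) → s1 < s2 → False := by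
      rintro s1 s2 ⟨hs1, hmin1⟩ ⟨hs2, hmin2⟩ hlt
      obtain ⟨p, hp1, hp2⟩ := exists_rat_btwn hlt
      obtain ⟨q, hq1, hq2⟩ := exists_rat_btwn hp2
      have hcp : c ≤ (p:ℝ) := le_trans hs1.1 hp1.le
      have hqd : (q:ℝ) ≤ d := le_trans hq2.le hs2.2
      have hpd : (p:ℝ) ≤ d := le_trans hq1.le hqd
      have hcq : c ≤ (q:ℝ) := le_trans hcp hq1.le
      have hM1 : f s1 = minOnIcc f c d := by
        have := hmin s1 hs1
        have := hmin1 s hs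
        rw [heq]; linarith
      have hM2 : f s2 = minOnIcc f c d := by
        have := hmin s2 hs2
        have := hmin2 s hs
        rw [heq]; linarith
      apply hR p q hcp hq1 hqd
      constructor
      · apply le_antisymm
        · rw [← hM1]
          exact csInf_le (isCompact_Icc.image hf).bddBelow ⟨s1, ⟨hs1.1, hp1.le⟩, rfl⟩
        · exact csInf_le_csInf (isCompact_Icc.image hf).bddBelow
            ⟨f s1, s1, ⟨hs1.1, hp1.le⟩, rfl⟩ (image_mono (f := f) (Icc_subset_Icc le_rfl hpd))
      · apply le_antisymm
        · rw [← hM2]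
          exact csInf_le (isCompact_Icc.image hf).bddBelow ⟨s2, ⟨hq2.le, hs2.2⟩, rfl⟩
        · exact csInf_le_csInf (isCompact_Icc.image hf).bddBelow
            ⟨f s2, s2, ⟨hq2.le, hs2.2⟩, rfl⟩ (image_mono (f := f) (Icc_subset_Icc hcq le_rfl))
    intro y hy
    rcases lt_trichotomy y s with h | h | h
    · exact absurd (key y s hy ⟨hs, hmin⟩ h) (not_false)
    · exact h
    · exact absurd (key s y ⟨hs, hmin⟩ hy h) (not_false)

def BadMin (f : ℝ → ℝ) (a b : ℚ) : Prop :=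
  0 ≤ (a:ℝ) ∧ (a:ℝ) < (b:ℝ) ∧ (b:ℝ) ≤ 1 ∧ minOnIcc f a b = 0 ∧
  (∃! s, s ∈ Icc (a:ℝ) (b:ℝ) ∧ ∀ u ∈ Icc (a:ℝ) (b:ℝ), f s ≤ f u) ∧
  (0 < f a ∨ (a:ℝ) = 0) ∧ (0 < f b ∨ (b:ℝ) = 1)

lemma strictMin_iff {f : ℝ → ℝ} (hf : Continuous f) (h0 : f 0 = 0) (h1 : f 1 = 0) :
    (∃ t ∈ Icc (0:ℝ) 1, f t = 0 ∧
        ∃ δ > 0, ∀ s ∈ Icc (0:ℝ) 1, s ≠ t → |s - t| < δ → f t < f s) ↔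
    ∃ a b : ℚ, BadMin f a b := by
  constructor
  · rintro ⟨t, ⟨ht0, ht1⟩, hft, δ, hδ, hloc⟩
    have hloc' : ∀ s ∈ Icc (0:ℝ) 1, s ≠ t → |s - t| < δ → 0 < f s := by
      intro s hs hst hd; have := hloc s hs hst hd; rwa [hft] at this
    rcases eq_or_lt_of_le ht0 with h0t | h0t
    · -- t = 0
      obtain ⟨b, hb1, hb2⟩ := exists_rat_btwn (show (0:ℝ) < min δ 1 by positivity)
      have hbδ : (b:ℝ) < δ := hb2.trans_le (min_le_left _ _)
      have hb1' : (b:ℝ) ≤ 1 := (hb2.trans_le (min_le_right _ _)).le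
      have hpos : ∀ s ∈ Icc (0:ℝ) (b:ℝ), s ≠ t → 0 < f s := by
        intro s hs hst
        apply hloc' s ⟨hs.1, le_trans hs.2 hb1'⟩ hst
        rw [← h0t, sub_zero, abs_of_nonneg hs.1]
        exact lt_of_le_of_lt hs.2 hbδ
      have hle : ∀ u ∈ Icc (0:ℝ) (b:ℝ), f t ≤ f u := by
        intro u hu
        rcases eq_or_ne u t with rfl | hut
        · exact le_rfl
        · rw [hft]; exact (hpos u hu hut).le
      refine ⟨0, b, ?_, ?_, ?_, ?_, ?_, ?_, ?_⟩
      · norm_num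
      · push_cast; exact h0t ▸ hb1  -- (0:ℝ) < b
      · push_cast; exact hb1'
      · push_cast
        apply IsLeast.csInf_eq
        refine ⟨⟨t, ⟨ht0, ?_⟩, hft⟩, ?_⟩
        · rw [← h0t]; exact hb1.le
        · rintro y ⟨x, hx, rfl⟩
          rw [← hft]; exact hle x hx
      · push_cast
        refine ⟨t, ⟨⟨ht0, by rw [← h0t]; exact hb1.le⟩, hle⟩, ?_⟩
        rintro y ⟨hy, hymin⟩
        by_contra hne
        have := hpos y hy hne
        have := hymin t ⟨ht0, by rw [← h0t]; exact hb1.le⟩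
        rw [hft] at this; linarith
      · right; norm_num
      · left
        have hb0 : (0:ℝ) < b := hb1
        exact hpos b ⟨hb0.le, le_rfl⟩ (by rw [← h0t]; exact hb0.ne')
    · rcases eq_or_lt_of_le ht1 with h1t | h1t
      · -- t = 1
        have hmax : max (1 - δ) 0 < 1 := by
          apply max_lt _ one_pos; linarith
        obtain ⟨a, ha1, ha2⟩ := exists_rat_btwn hmax
        have haδ : 1 - δ < (a:ℝ) := lt_of_le_of_lt (le_max_left _ _) ha1
        have ha0 : (0:ℝ) ≤ a := (lt_of_le_of_lt (le_max_right _ _) ha1).le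
        have hpos : ∀ s ∈ Icc (a:ℝ) 1, s ≠ t → 0 < f s := by
          intro s hs hst
          apply hloc' s ⟨le_trans ha0 hs.1, hs.2⟩ hst
          rw [h1t, abs_of_nonpos (by linarith [hs.2])]
          linarith [hs.1]
        have hle : ∀ u ∈ Icc (a:ℝ) 1, f t ≤ f u := by
          intro u hu
          rcases eq_or_ne u t with rfl | hut
          · exact le_rfl
          · rw [hft]; exact (hpos u hu hut).le
        refine ⟨a, 1, ha0, by push_cast; exact ha2, by norm_num, ?_, ?_, ?_, ?_⟩
        · push_cast
          apply IsLeast.csInf_eq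
          refine ⟨⟨t, ⟨by rw [h1t]; exact ha2.le, ht1⟩, hft⟩, ?_⟩
          rintro y ⟨x, hx, rfl⟩
          rw [← hft]; exact hle x hx
        · push_cast
          refine ⟨t, ⟨⟨by rw [h1t]; exact ha2.le, ht1⟩, hle⟩, ?_⟩
          rintro y ⟨hy, hymin⟩
          by_contra hne
          have := hpos y hy hne
          have := hymin t ⟨by rw [h1t]; exact ha2.le, ht1⟩
          rw [hft] at this; linarith
        · left
          apply hpos a ⟨le_rfl, ha2.le⟩
          rw [h1t]; exact ha2.ne
        · right; norm_num
      · -- 0 < t < 1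
        have hlo : max (t - δ) 0 < t := max_lt (by linarith) h0t
        obtain ⟨a, ha1, ha2⟩ := exists_rat_btwn hlo
        have haδ : t - δ < (a:ℝ) := lt_of_le_of_lt (le_max_left _ _) ha1
        have ha0 : (0:ℝ) ≤ a := (lt_of_le_of_lt (le_max_right _ _) ha1).le
        have hhi : t < min (t + δ) 1 := lt_min (by linarith) h1t
        obtain ⟨b, hb1, hb2⟩ := exists_rat_btwn hhi
        have hbδ : (b:ℝ) < t + δ := hb2.trans_le (min_le_left _ _)
        have hb1' : (b:ℝ) ≤ 1 := (hb2.trans_le (min_le_right _ _)).le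
        have hpos : ∀ s ∈ Icc (a:ℝ) (b:ℝ), s ≠ t → 0 < f s := by
          intro s hs hst
          apply hloc' s ⟨le_trans ha0 hs.1, le_trans hs.2 hb1'⟩ hst
          rw [abs_sub_lt_iff]
          constructor <;> [linarith [hs.2]; linarith [hs.1]]
        have hle : ∀ u ∈ Icc (a:ℝ) (b:ℝ), f t ≤ f u := by
          intro u hu
          rcases eq_or_ne u t with rfl | hut
          · exact le_rfl
          · rw [hft]; exact (hpos u hu hut).le
        have htm : t ∈ Icc (a:ℝ) (b:ℝ) := ⟨ha2.le, hb1.le⟩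
        refine ⟨a, b, ha0, ha2.trans hb1, hb1', ?_, ?_, ?_, ?_⟩
        · apply IsLeast.csInf_eq
          refine ⟨⟨t, htm, hft⟩, ?_⟩
          rintro y ⟨x, hx, rfl⟩
          rw [← hft]; exact hle x hx
        · refine ⟨t, ⟨htm, hle⟩, ?_⟩
          rintro y ⟨hy, hymin⟩
          by_contra hne
          have := hpos y hy hne
          have := hymin t htm
          rw [hft] at this; linarith
        · left; exact hpos a ⟨le_rfl, (ha2.trans hb1).le⟩ ha2.ne
        · left; exact hpos b ⟨(ha2.trans hb1).le, le_rfl⟩ hb1.ne'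
  · rintro ⟨a, b, ha0, hab, hb1, hmin0, ⟨s0, ⟨hs0mem, hs0min⟩, huniq⟩, hA, hB⟩
    have habIcc : Icc (a:ℝ) (b:ℝ) ⊆ Icc (0:ℝ) 1 := Icc_subset_Icc ha0 hb1
    have hfs0 : f s0 = 0 := by
      have : minOnIcc f a b = f s0 := IsLeast.csInf_eq ⟨⟨s0, hs0mem, rfl⟩, by
        rintro y ⟨x, hx, rfl⟩; exact hs0min x hx⟩
      rw [← this, hmin0]
    have hpos : ∀ u ∈ Icc (a:ℝ) (b:ℝ), u ≠ s0 → 0 < f u := by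
      intro u hu hus
      have h1' : f s0 ≤ f u := hs0min u hu
      rcases eq_or_lt_of_le h1' with he | hl
      · exfalso
        apply hus
        apply huniq u ⟨hu, ?_⟩
        intro v hv
        rw [← he]; exact hs0min v hv
      · rwa [hfs0] at hl
    refine ⟨s0, habIcc hs0mem, hfs0, ?_⟩
    rcases eq_or_lt_of_le hs0mem.1 with has | has
    · -- s0 = a, so a = 0 (cast)
      have ha00 : (a:ℝ) = 0 := by
        rcases hA with h | h
        · exfalso; rw [has, hfs0] at h; exact lt_irrefl 0 h
        · exact h
      refine ⟨(b:ℝ), by rw [← ha00]; exact hab, ?_⟩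
      intro s hs hss hd
      rw [hfs0]
      apply hpos s ?_ hss
      constructor
      · rw [ha00]; exact hs.1
      · rw [← has, ha00] at hd
        rw [sub_zero, abs_of_nonneg hs.1] at hd
        exact hd.le
    · rcases eq_or_lt_of_le hs0mem.2 with hbs | hbs
      · -- s0 = b, so b = 1
        have hb11 : (b:ℝ) = 1 := by
          rcases hB with h | h
          · exfalso; rw [← hbs, hfs0] at h; exact lt_irrefl 0 h
          · exact h
        refine ⟨s0 - a, by linarith [has], ?_⟩
        intro s hs hss hd
        rw [hfs0]
        apply hpos s ?_ hss
        rw [abs_sub_lt_iff] at hd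
        constructor
        · linarith [hd.2]
        · rw [hb11]; exact hs.2
      · -- a < s0 < b
        refine ⟨min (s0 - a) ((b:ℝ) - s0), lt_min (by linarith) (by linarith), ?_⟩
        intro s hs hss hd
        rw [hfs0]
        apply hpos s ?_ hss
        rw [abs_sub_lt_iff] at hd
        have := lt_of_lt_of_le hd.1 (min_le_right _ _)
        have := lt_of_lt_of_le hd.2 (min_le_left _ _)
        constructor <;> linarith


def Regular' (f : ℝ → ℝ) : Prop :=
  (ContinuousOn f (Set.Icc 0 1) ∧ f 0 = 0 ∧ f 1 = 0) ∧
  (∀ t : ℚ, (t : ℝ) ∈ Set.Icc (0:ℝ) 1 →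
    (∃! s, s ∈ Set.Icc (0:ℝ) (t:ℝ) ∧ ∀ u ∈ Set.Icc (0:ℝ) (t:ℝ), f u ≤ f s) ∧
    (∃! s, s ∈ Set.Icc ((t:ℝ)) 1 ∧ ∀ u ∈ Set.Icc ((t:ℝ)) 1, f u ≤ f s)) ∧
  (¬ ∃ t ∈ Set.Icc (0:ℝ) 1, f t = 0 ∧
      ∃ δ > 0, ∀ s ∈ Set.Icc (0:ℝ) 1, s ≠ t → |s - t| < δ → f t < f s)

lemma regular_iff (w : CC) :
    Regular' (F w) ↔
      (F w 0 = 0 ∧ F w 1 = 0) ∧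
      (∀ t : ℚ, (t:ℝ) ∈ Icc (0:ℝ) 1 →
        (∀ p q : ℚ, (0:ℝ) ≤ (p:ℝ) → (p:ℝ) < (q:ℝ) → (q:ℝ) ≤ (t:ℝ) →
          ¬(maxOnIcc (F w) 0 p = maxOnIcc (F w) 0 t ∧ maxOnIcc (F w) q t = maxOnIcc (F w) 0 t)) ∧
        (∀ p q : ℚ, (t:ℝ) ≤ (p:ℝ) → (p:ℝ) < (q:ℝ) → (q:ℝ) ≤ 1 →
          ¬(maxOnIcc (F w) t p = maxOnIcc (F w) t 1 ∧ maxOnIcc (F w) q 1 = maxOnIcc (F w) t 1))) ∧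
      (∀ a b : ℚ, ¬ BadMin (F w) a b) := by
  constructor
  · rintro ⟨⟨_, hb0, hb1⟩, hU, hN⟩
    refine ⟨⟨hb0, hb1⟩, ?_, ?_⟩
    · intro t ht
      obtain ⟨hu1, hu2⟩ := hU t ht
      exact ⟨(uniqueMax_iff (continuous_F w) ht.1).mp hu1,
             (uniqueMax_iff (continuous_F w) ht.2).mp hu2⟩
    · intro a b hbad
      exact hN ((strictMin_iff (continuous_F w) hb0 hb1).mpr ⟨a, b, hbad⟩)
  · rintro ⟨⟨hb0, hb1⟩, hU, hN⟩
    refine ⟨⟨(continuous_F w).continuousOn, hb0, hb1⟩, ?_, ?_⟩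
    · intro t ht
      exact ⟨(uniqueMax_iff (continuous_F w) ht.1).mpr (hU t ht).1,
             (uniqueMax_iff (continuous_F w) ht.2).mpr (hU t ht).2⟩
    · intro hex
      obtain ⟨a, b, hbad⟩ := (strictMin_iff (continuous_F w) hb0 hb1).mp hex
      exact hN a b hbad

lemma meas_eval (x : ℝ) : Continuous (fun w : CC => F w x) :=
  ContinuousEvalConst.continuous_eval_const (projIcc 0 1 zero_le_one x)

lemma meas_badMin (a b : ℚ) :
    MeasurableSet[borel CC] {w : CC | BadMin (F w) a b} := by
  letI : MeasurableSpace CC := borel CC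
  haveI : BorelSpace CC := ⟨rfl⟩
  by_cases hab : (0:ℝ) ≤ (a:ℝ) ∧ (a:ℝ) < (b:ℝ) ∧ (b:ℝ) ≤ 1
  · have hab' : (a:ℝ) ≤ (b:ℝ) := hab.2.1.le
    have hEq : {w : CC | BadMin (F w) a b} =
        {w : CC | minOnIcc (F w) a b = 0} ∩
        (⋂ (p : ℚ) (q : ℚ) (_ : (a:ℝ) ≤ (p:ℝ)) (_ : (p:ℝ) < (q:ℝ)) (_ : (q:ℝ) ≤ (b:ℝ)),
          {w : CC | minOnIcc (F w) a p = minOnIcc (F w) a b ∧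
            minOnIcc (F w) q b = minOnIcc (F w) a b}ᶜ) ∩
        {w : CC | 0 < F w a ∨ (a:ℝ) = 0} ∩ {w : CC | 0 < F w b ∨ (b:ℝ) = 1} := by
      ext w
      simp only [mem_inter_iff, mem_iInter, mem_compl_iff, mem_setOf_eq]
      unfold BadMin
      rw [uniqueMin_iff (continuous_F w) hab']
      constructor
      · rintro ⟨_, _, _, h4, h5, h6, h7⟩
        exact ⟨⟨⟨h4, fun p q hp hpq hq => h5 p q hp hpq hq⟩, h6⟩, h7⟩
      · rintro ⟨⟨⟨h4, h5⟩, h6⟩, h7⟩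
        exact ⟨hab.1, hab.2.1, hab.2.2, h4, fun p q hp hpq hq => h5 p q hp hpq hq, h6, h7⟩
    rw [hEq]
    refine (((?_ : MeasurableSet _).inter ?_).inter ?_).inter ?_
    · exact measurableSet_eq_fun ((continuous_minOnF hab').measurable) measurable_const
    · refine MeasurableSet.iInter fun p => MeasurableSet.iInter fun q =>
        MeasurableSet.iInter fun hp => MeasurableSet.iInter fun hpq =>
        MeasurableSet.iInter fun hq => MeasurableSet.compl ?_
      have h1 : (a:ℝ) ≤ (p:ℝ) := hp
      have h2 : (q:ℝ) ≤ (b:ℝ) := hq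
      exact (measurableSet_eq_fun ((continuous_minOnF h1).measurable)
          ((continuous_minOnF hab').measurable)).inter
        (measurableSet_eq_fun ((continuous_minOnF h2).measurable)
          ((continuous_minOnF hab').measurable))
    · exact (measurableSet_lt measurable_const (meas_eval (a:ℝ)).measurable).union
        (MeasurableSet.const _)
    · exact (measurableSet_lt measurable_const (meas_eval (b:ℝ)).measurable).union
        (MeasurableSet.const _)
  · have : {w : CC | BadMin (F w) a b} = ∅ := by
      ext w
      simp only [mem_setOf_eq, mem_empty_iff_false, iff_false]
      intro hbad
      exact hab ⟨hbad.1, hbad.2.1, hbad.2.2.1⟩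
    rw [this]
    exact MeasurableSet.empty

lemma main :
    MeasurableSet[borel CC] {w : CC | Regular' (Set.IccExtend zero_le_one ⇑w)} := by
  letI : MeasurableSpace CC := borel CC
  haveI : BorelSpace CC := ⟨rfl⟩
  have hEq : {w : CC | Regular' (Set.IccExtend zero_le_one ⇑w)} =
      ({w : CC | F w 0 = 0} ∩ {w : CC | F w 1 = 0}) ∩
      ((⋂ (t : ℚ) (_ : (t:ℝ) ∈ Icc (0:ℝ) 1),
        ((⋂ (p : ℚ) (q : ℚ) (_ : (0:ℝ) ≤ (p:ℝ)) (_ : (p:ℝ) < (q:ℝ)) (_ : (q:ℝ) ≤ (t:ℝ)),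
          {w : CC | maxOnIcc (F w) 0 p = maxOnIcc (F w) 0 t ∧
            maxOnIcc (F w) q t = maxOnIcc (F w) 0 t}ᶜ) ∩
         (⋂ (p : ℚ) (q : ℚ) (_ : (t:ℝ) ≤ (p:ℝ)) (_ : (p:ℝ) < (q:ℝ)) (_ : (q:ℝ) ≤ 1),
          {w : CC | maxOnIcc (F w) t p = maxOnIcc (F w) t 1 ∧
            maxOnIcc (F w) q 1 = maxOnIcc (F w) t 1}ᶜ))) ∩
       (⋂ (a : ℚ) (b : ℚ), {w : CC | BadMin (F w) a b}ᶜ)) := by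
    ext w
    simp only [mem_inter_iff, mem_iInter, mem_compl_iff, mem_setOf_eq]
    rw [show Set.IccExtend zero_le_one ⇑w = F w from rfl, regular_iff]
  rw [hEq]
  refine MeasurableSet.inter (MeasurableSet.inter ?_ ?_) (MeasurableSet.inter ?_ ?_)
  · exact measurableSet_eq_fun (meas_eval 0).measurable measurable_const
  · exact measurableSet_eq_fun (meas_eval 1).measurable measurable_const
  · refine MeasurableSet.iInter fun t => MeasurableSet.iInter fun ht => MeasurableSet.inter ?_ ?_
    · refine MeasurableSet.iInter fun p => MeasurableSet.iInter fun q =>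
        MeasurableSet.iInter fun hp => MeasurableSet.iInter fun hpq =>
        MeasurableSet.iInter fun hq => MeasurableSet.compl ?_
      have h1 : (0:ℝ) ≤ (p:ℝ) := hp
      have h2 : (q:ℝ) ≤ (t:ℝ) := hq
      have h0t : (0:ℝ) ≤ (t:ℝ) := ht.1
      exact (measurableSet_eq_fun ((continuous_maxOnF h1).measurable)
          ((continuous_maxOnF h0t).measurable)).inter
        (measurableSet_eq_fun ((continuous_maxOnF h2).measurable)
          ((continuous_maxOnF h0t).measurable))
    · refine MeasurableSet.iInter fun p => MeasurableSet.iInter fun q =>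
        MeasurableSet.iInter fun hp => MeasurableSet.iInter fun hpq =>
        MeasurableSet.iInter fun hq => MeasurableSet.compl ?_
      have h1 : (t:ℝ) ≤ (p:ℝ) := hp
      have h2 : (q:ℝ) ≤ (1:ℝ) := hq
      have ht1 : (t:ℝ) ≤ 1 := ht.2
      exact (measurableSet_eq_fun ((continuous_maxOnF h1).measurable)
          ((continuous_maxOnF ht1).measurable)).inter
        (measurableSet_eq_fun ((continuous_maxOnF h2).measurable)
          ((continuous_maxOnF ht1).measurable))
  · exact MeasurableSet.iInter fun a => MeasurableSet.iInter fun b =>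
      MeasurableSet.compl (meas_badMin a b)

end Stmt10Aux


/-- `B^reg_1` is a Borel subset of `C([0,1],ℝ)`. -/
theorem stmt10 :
    MeasurableSet[borel C(Set.Icc (0:ℝ) 1, ℝ)]
      {w : C(Set.Icc (0:ℝ) 1, ℝ) | Regular (Set.IccExtend zero_le_one ⇑w)} := by
  exact Stmt10Aux.main
end
end

section
/- The set M^reg_1 := {w ∈ M_1 : T^br(w) ∈ B^reg_1} is a Borel subset of C([0,1],ℝ). -/
open Set Filter MeasureTheory Topology UniformConvergence

noncomputable section

abbrev XX := C(Set.Icc (0:ℝ) 1, ℝ)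

def ex (w : XX) : ℝ → ℝ := Set.IccExtend zero_le_one ⇑w

lemma ex_cont (w : XX) : Continuous (ex w) := w.continuous.Icc_extend'

lemma cont_ex_eval (s : ℝ) : Continuous fun w : XX => ex w s :=
  continuous_eval_const _

lemma cont_ex_pair : Continuous fun p : XX × ℝ => ex p.1 p.2 := by
  have h1 : Continuous fun p : XX × (Set.Icc (0:ℝ) 1) => p.1 p.2 :=
    continuous_eval
  have h2 : Continuous fun p : XX × ℝ => (p.1, Set.projIcc (0:ℝ) 1 zero_le_one p.2) :=
    continuous_fst.prodMk ((continuous_projIcc).comp continuous_snd)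
  exact h1.comp h2

section maxmin
variable {h : ℝ → ℝ} {a b : ℝ}

lemma le_maxOn (hc : ContinuousOn h (Icc a b)) (hab : a ≤ b) {u : ℝ} (hu : u ∈ Icc a b) :
    h u ≤ maxOnIcc h a b :=
  le_csSup ((isCompact_Icc.image_of_continuousOn hc).bddAbove) ⟨u, hu, rfl⟩

lemma maxOn_le (hab : a ≤ b) {c : ℝ} (hc : ∀ u ∈ Icc a b, h u ≤ c) : maxOnIcc h a b ≤ c :=
  csSup_le ((nonempty_Icc.2 hab).image _) (by rintro y ⟨u, hu, rfl⟩; exact hc u hu)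

lemma exists_maxOn (hc : ContinuousOn h (Icc a b)) (hab : a ≤ b) :
    ∃ x ∈ Icc a b, h x = maxOnIcc h a b ∧ ∀ u ∈ Icc a b, h u ≤ h x := by
  obtain ⟨x, hx, hmax⟩ := isCompact_Icc.exists_isMaxOn (nonempty_Icc.2 hab) hc
  refine ⟨x, hx, le_antisymm (le_maxOn hc hab hx) (maxOn_le hab fun u hu => hmax hu), fun u hu => hmax hu⟩

lemma minOn_le_val (hc : ContinuousOn h (Icc a b)) (hab : a ≤ b) {u : ℝ} (hu : u ∈ Icc a b) :
    minOnIcc h a b ≤ h u :=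
  csInf_le ((isCompact_Icc.image_of_continuousOn hc).bddBelow) ⟨u, hu, rfl⟩

lemma le_minOn (hab : a ≤ b) {c : ℝ} (hc : ∀ u ∈ Icc a b, c ≤ h u) : c ≤ minOnIcc h a b :=
  le_csInf ((nonempty_Icc.2 hab).image _) (by rintro y ⟨u, hu, rfl⟩; exact hc u hu)

lemma exists_minOn (hc : ContinuousOn h (Icc a b)) (hab : a ≤ b) :
    ∃ x ∈ Icc a b, h x = minOnIcc h a b ∧ ∀ u ∈ Icc a b, h x ≤ h u := by
  obtain ⟨x, hx, hmin⟩ := isCompact_Icc.exists_isMinOn (nonempty_Icc.2 hab) hc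
  refine ⟨x, hx, le_antisymm (le_minOn hab fun u hu => hmin hu) (minOn_le_val hc hab hx), fun u hu => hmin hu⟩

end maxmin

section meander
variable {f : ℝ → ℝ} (hf : Continuous f) (h0 : f 0 = 0) (hm : ∀ s ∈ Icc (0:ℝ) 1, f s ≤ f 1)
include hf h0 hm

lemma f1_nonneg : 0 ≤ f 1 := h0 ▸ hm 0 ⟨le_refl 0, zero_le_one⟩

lemma gamma_mem : gammaHalf 1 f ∈ Icc (0:ℝ) 1 ∧ f (gammaHalf 1 f) = f 1 / 2 := by
  have h1 : 0 ≤ f 1 := f1_nonneg hf h0 hm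
  have hS : IsClosed {s | s ∈ Icc (0:ℝ) 1 ∧ f s = f 1 / 2} := by
    have : {s | s ∈ Icc (0:ℝ) 1 ∧ f s = f 1 / 2} = Icc (0:ℝ) 1 ∩ f ⁻¹' {f 1 / 2} := by
      ext s
      simp only [Set.mem_setOf_eq, Set.mem_inter_iff, Set.mem_preimage, Set.mem_singleton_iff]
    rw [this]
    exact isClosed_Icc.inter (isClosed_singleton.preimage hf)
  have hne : {s | s ∈ Icc (0:ℝ) 1 ∧ f s = f 1 / 2}.Nonempty := by
    have := intermediate_value_Icc zero_le_one hf.continuousOn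
    have hmem : f 1 / 2 ∈ Icc (f 0) (f 1) := by
      rw [h0]; exact ⟨by linarith, by linarith⟩
    obtain ⟨c, hc, hfc⟩ := this hmem
    exact ⟨c, hc, hfc⟩
  have hbdd : BddBelow {s | s ∈ Icc (0:ℝ) 1 ∧ f s = f 1 / 2} := ⟨0, fun s hs => hs.1.1⟩
  have := hS.csInf_mem hne hbdd
  exact ⟨this.1, this.2⟩

lemma gamma_le_iff {c : ℝ} (hc : c ∈ Icc (0:ℝ) 1) :
    gammaHalf 1 f ≤ c ↔ f 1 / 2 ≤ maxOnIcc f 0 c := by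
  have hbdd : BddBelow {s | s ∈ Icc (0:ℝ) 1 ∧ f s = f 1 / 2} := ⟨0, fun s hs => hs.1.1⟩
  constructor
  · intro hle
    have hg := gamma_mem hf h0 hm
    have : gammaHalf 1 f ∈ Icc 0 c := ⟨hg.1.1, hle⟩
    calc f 1 / 2 = f (gammaHalf 1 f) := hg.2.symm
    _ ≤ maxOnIcc f 0 c := le_maxOn hf.continuousOn hc.1 this
  · intro hle
    obtain ⟨x, hx, hfx, -⟩ := exists_maxOn (hf.continuousOn (s := Icc 0 c)) hc.1
    have hx2 : f 1 / 2 ∈ Icc (f 0) (f x) := by rw [h0]; exact ⟨by linarith [f1_nonneg hf h0 hm], by linarith [hfx ▸ hle]⟩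
    obtain ⟨s, hs, hfs⟩ := intermediate_value_Icc hx.1 hf.continuousOn hx2
    have hs1 : s ∈ Icc (0:ℝ) 1 := ⟨hs.1, le_trans (le_trans hs.2 hx.2) hc.2⟩
    exact le_trans (csInf_le hbdd ⟨hs1, hfs⟩) (le_trans hs.2 hx.2)

lemma Tbr_cont : Continuous (Tbr 1 f) := by
  have hg := gamma_mem hf h0 hm
  unfold Tbr
  refine Continuous.if_le hf ((hf.comp (continuous_const.sub continuous_id)).sub continuous_const)
    continuous_id continuous_const ?_
  intro t ht
  rw [show (t:ℝ) = gammaHalf 1 f from ht]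
  show f (gammaHalf 1 f) = f (1 + gammaHalf 1 f - gammaHalf 1 f) - f (gammaHalf 1 f)
  rw [show (1:ℝ) + gammaHalf 1 f - gammaHalf 1 f = 1 by ring, hg.2]
  linarith

lemma Tbr_zero : Tbr 1 f 0 = 0 := by
  have hg := gamma_mem hf h0 hm
  rw [Tbr, if_pos hg.1.1]; exact h0

lemma Tbr_one : Tbr 1 f 1 = 0 := by
  have hg := gamma_mem hf h0 hm
  by_cases h : (1:ℝ) ≤ gammaHalf 1 f
  · have heq : gammaHalf 1 f = 1 := le_antisymm hg.1.2 h
    rw [Tbr]; simp only [if_pos h]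
    have := hg.2; rw [heq] at this; linarith
  · rw [Tbr]; simp only [if_neg h]
    rw [show (1:ℝ) + gammaHalf 1 f - 1 = gammaHalf 1 f by ring]; ring

end meander

section charac
variable {g : ℝ → ℝ}

lemma maxOn_mono (hg : Continuous g) {a b a' b' : ℝ} (ha : a ≤ a') (hb : b' ≤ b)
    (hab' : a' ≤ b') : maxOnIcc g a' b' ≤ maxOnIcc g a b :=
  maxOn_le hab' fun u hu => le_maxOn hg.continuousOn ((ha.trans hab').trans hb)
    ⟨ha.trans hu.1, hu.2.trans hb⟩

lemma uniqueMax_iff (hg : Continuous g) {a b : ℝ} (hab : a ≤ b) :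
    (∃! s, s ∈ Icc a b ∧ ∀ u ∈ Icc a b, g u ≤ g s) ↔
      ∀ p q : ℚ, a ≤ (p:ℝ) → (p:ℝ) < (q:ℝ) → (q:ℝ) ≤ b →
        ¬(maxOnIcc g a p = maxOnIcc g a b ∧ maxOnIcc g q b = maxOnIcc g a b) := by
  constructor
  · rintro ⟨s0, hs0, huniq⟩ p q hap hpq hqb ⟨h1, h2⟩
    have hpb : (p:ℝ) ≤ b := (hpq.le.trans hqb)
    have haq : a ≤ (q:ℝ) := hap.trans hpq.le
    obtain ⟨x, hx, hfx, -⟩ := exists_maxOn hg.continuousOn hap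
    obtain ⟨y, hy, hfy, -⟩ := exists_maxOn hg.continuousOn hqb
    have hxm : x ∈ Icc a b ∧ ∀ u ∈ Icc a b, g u ≤ g x := by
      refine ⟨⟨hx.1, hx.2.trans hpb⟩, fun u hu => ?_⟩
      rw [hfx, h1]; exact le_maxOn hg.continuousOn hab hu
    have hym : y ∈ Icc a b ∧ ∀ u ∈ Icc a b, g u ≤ g y := by
      refine ⟨⟨haq.trans hy.1, hy.2⟩, fun u hu => ?_⟩
      rw [hfy, h2]; exact le_maxOn hg.continuousOn hab hu
    have hxy : x = y := (huniq x hxm).trans (huniq y hym).symm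
    have : x < y := lt_of_le_of_lt hx.2 (lt_of_lt_of_le hpq hy.1)
    exact absurd hxy this.ne
  · intro hrat
    have key : ∀ u v, u ∈ Icc a b → v ∈ Icc a b → (∀ z ∈ Icc a b, g z ≤ g u) →
        (∀ z ∈ Icc a b, g z ≤ g v) → u < v → False := by
      intro u v hu hv hmu hmv huv
      obtain ⟨p, hp1, hp2⟩ := exists_rat_btwn huv
      obtain ⟨q, hq1, hq2⟩ := exists_rat_btwn hp2
      refine hrat p q (hu.1.trans hp1.le) hq1 (hq2.le.trans hv.2) ⟨?_, ?_⟩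
      · refine le_antisymm (maxOn_mono hg le_rfl (hp2.le.trans hv.2) (hu.1.trans hp1.le)) ?_
        calc maxOnIcc g a b ≤ g u := maxOn_le hab hmu
        _ ≤ maxOnIcc g a p := le_maxOn hg.continuousOn (hu.1.trans hp1.le) ⟨hu.1, hp1.le⟩
      · refine le_antisymm (maxOn_mono hg ((hu.1.trans hp1.le).trans hq1.le) le_rfl (hq2.le.trans hv.2)) ?_
        calc maxOnIcc g a b ≤ g v := maxOn_le hab hmv
        _ ≤ maxOnIcc g q b := le_maxOn hg.continuousOn (hq2.le.trans hv.2) ⟨hq2.le, hv.2⟩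
    obtain ⟨x, hx, hfx, hxmax⟩ := exists_maxOn hg.continuousOn hab
    refine ⟨x, ⟨hx, hxmax⟩, ?_⟩
    rintro y ⟨hy, hymax⟩
    rcases lt_trichotomy y x with h | h | h
    · exact absurd (key y x hy hx hymax hxmax h) id
    · exact h
    · exact absurd (key x y hx hy hxmax hymax h) id

lemma two_zeros_iff (hg : Continuous g) {p q : ℝ} (hpq : p ≤ q)
    (hnn : ∀ u ∈ Icc p q, 0 ≤ g u) :
    (∃ t1 ∈ Icc p q, ∃ t2 ∈ Icc p q, t1 < t2 ∧ g t1 = 0 ∧ g t2 = 0) ↔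
      ∃ a b : ℚ, p ≤ (a:ℝ) ∧ (a:ℝ) < b ∧ (b:ℝ) ≤ q ∧ minOnIcc g p a = 0 ∧ minOnIcc g b q = 0 := by
  constructor
  · rintro ⟨t1, ht1, t2, ht2, hlt, hz1, hz2⟩
    obtain ⟨A, hA1, hA2⟩ := exists_rat_btwn hlt
    obtain ⟨B, hB1, hB2⟩ := exists_rat_btwn hA2
    have hAq : (A:ℝ) ≤ q := (hA2.le.trans ht2.2)
    have hBp : p ≤ (B:ℝ) := ht1.1.trans (hA1.le.trans hB1.le)
    refine ⟨A, B, ht1.1.trans hA1.le, hB1, hB2.le.trans ht2.2, ?_, ?_⟩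
    · refine le_antisymm (hz1 ▸ minOn_le_val hg.continuousOn (ht1.1.trans hA1.le) ⟨ht1.1, hA1.le⟩) ?_
      exact le_minOn (ht1.1.trans hA1.le) fun u hu => hnn u ⟨hu.1, hu.2.trans hAq⟩
    · refine le_antisymm (hz2 ▸ minOn_le_val hg.continuousOn (hB2.le.trans ht2.2) ⟨hB2.le, ht2.2⟩) ?_
      exact le_minOn (hB2.le.trans ht2.2) fun u hu => hnn u ⟨hBp.trans hu.1, hu.2⟩
  · rintro ⟨A, B, hpA, hAB, hBq, hm1, hm2⟩
    obtain ⟨z1, hz1, hz1v, -⟩ := exists_minOn hg.continuousOn hpA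
    obtain ⟨z2, hz2, hz2v, -⟩ := exists_minOn hg.continuousOn hBq
    exact ⟨z1, ⟨hz1.1, hz1.2.trans (hAB.le.trans hBq)⟩, z2, ⟨(hpA.trans hAB.le).trans hz2.1, hz2.2⟩,
      lt_of_le_of_lt hz1.2 (lt_of_lt_of_le hAB hz2.1), hz1v.trans hm1, hz2v.trans hm2⟩

end charac

lemma exists_strictMin_iff {g : ℝ → ℝ} (hg : Continuous g) :
    (∃ t ∈ Icc (0:ℝ) 1, g t = 0 ∧ ∃ δ > 0, ∀ s ∈ Icc (0:ℝ) 1, s ≠ t → |s - t| < δ → g t < g s) ↔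
      ∃ p q : ℚ, 0 ≤ (p:ℝ) ∧ (p:ℝ) < (q:ℝ) ∧ (q:ℝ) ≤ 1 ∧ minOnIcc g p q = 0 ∧
        (∀ a b : ℚ, (p:ℝ) ≤ (a:ℝ) → (a:ℝ) < (b:ℝ) → (b:ℝ) ≤ (q:ℝ) →
          ¬(minOnIcc g p a = 0 ∧ minOnIcc g b q = 0)) ∧
        ((p:ℝ) = 0 ∨ 0 < g p) ∧ ((q:ℝ) = 1 ∨ 0 < g q) := by
  constructor
  · rintro ⟨t, ht, hgt, δ, hδ, hmin⟩
    have hpos : ∀ s ∈ Icc (0:ℝ) 1, s ≠ t → |s - t| < δ → 0 < g s := by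
      intro s hs hne hd; have := hmin s hs hne hd; linarith [hgt ▸ this]
    obtain ⟨p, hp0, hpt, hptδ, hpalt⟩ :
        ∃ p : ℚ, 0 ≤ (p:ℝ) ∧ (p:ℝ) ≤ t ∧ t - (p:ℝ) < δ ∧ ((p:ℝ) = 0 ∨ 0 < g p) := by
      by_cases htδ : t - δ < 0
      · exact ⟨0, by norm_num, by exact_mod_cast ht.1, by push_cast; linarith [ht.1], Or.inl (by norm_num)⟩
      · push_neg at htδ
        have htpos : (0:ℝ) < t := lt_of_lt_of_le hδ (by linarith)
        obtain ⟨p, hp1, hp2⟩ := exists_rat_btwn (show t - δ < t by linarith)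
        have hp0 : (0:ℝ) ≤ p := le_trans htδ hp1.le
        refine ⟨p, hp0, hp2.le, by linarith, Or.inr ?_⟩
        exact hpos p ⟨hp0, hp2.le.trans ht.2⟩ hp2.ne (by rw [abs_lt]; constructor <;> linarith)
    obtain ⟨q, hq1, htq, hqtδ, hqalt⟩ :
        ∃ q : ℚ, (q:ℝ) ≤ 1 ∧ t ≤ (q:ℝ) ∧ (q:ℝ) - t < δ ∧ ((q:ℝ) = 1 ∨ 0 < g q) := by
      by_cases htδ : 1 < t + δ
      · exact ⟨1, by norm_num, by exact_mod_cast ht.2, by push_cast; linarith [ht.2], Or.inl (by norm_num)⟩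
      · push_neg at htδ
        obtain ⟨q, hq1, hq2⟩ := exists_rat_btwn (show t < t + δ by linarith)
        have hqle : (q:ℝ) ≤ 1 := hq2.le.trans htδ
        refine ⟨q, hqle, hq1.le, by linarith, Or.inr ?_⟩
        exact hpos q ⟨ht.1.trans hq1.le, hqle⟩ hq1.ne' (by rw [abs_lt]; constructor <;> linarith)
    have hpq : (p:ℝ) < (q:ℝ) := by
      by_contra h
      push_neg at h
      have hpt' : (p:ℝ) = t := le_antisymm hpt (htq.trans h)
      have hqt' : (q:ℝ) = t := le_antisymm (h.trans hpt) htq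
      have hp0' : (p:ℝ) = 0 := by
        rcases hpalt with h0 | hgp
        · exact h0
        · rw [hpt', hgt] at hgp; exact absurd hgp (lt_irrefl 0)
      have hq1' : (q:ℝ) = 1 := by
        rcases hqalt with h1 | hgq
        · exact h1
        · rw [hqt', hgt] at hgq; exact absurd hgq (lt_irrefl 0)
      rw [hp0'] at hpt'; rw [hq1'] at hqt'; rw [← hpt'] at hqt'; norm_num at hqt'
    have hsub : ∀ s ∈ Icc (p:ℝ) (q:ℝ), s ≠ t → 0 < g s := by
      intro s hs hne
      apply hpos s ⟨hp0.trans hs.1, hs.2.trans hq1⟩ hne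
      rw [abs_lt]
      constructor
      · linarith [hs.1]
      · linarith [hs.2]
    have hnn : ∀ u ∈ Icc (p:ℝ) (q:ℝ), 0 ≤ g u := by
      intro u hu
      by_cases hut : u = t
      · rw [hut, hgt]
      · exact (hsub u hu hut).le
    have htmem : t ∈ Icc (p:ℝ) (q:ℝ) := ⟨hpt, htq⟩
    refine ⟨p, q, hp0, hpq, hq1, ?_, ?_, hpalt, hqalt⟩
    · exact le_antisymm (hgt ▸ minOn_le_val hg.continuousOn hpq.le htmem) (le_minOn hpq.le hnn)
    · rintro a b hpa hab hbq ⟨h1, h2⟩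
      obtain ⟨z1, hz1, hz1v, -⟩ := exists_minOn hg.continuousOn hpa
      obtain ⟨z2, hz2, hz2v, -⟩ := exists_minOn hg.continuousOn hbq
      have hz1t : z1 = t := by
        by_contra hne
        have := hsub z1 ⟨hz1.1, hz1.2.trans (hab.le.trans hbq)⟩ hne
        rw [hz1v, h1] at this; exact lt_irrefl 0 this
      have hz2t : z2 = t := by
        by_contra hne
        have := hsub z2 ⟨(hpa.trans hab.le).trans hz2.1, hz2.2⟩ hne
        rw [hz2v, h2] at this; exact lt_irrefl 0 this
      have h3 : t ≤ (a:ℝ) := hz1t ▸ hz1.2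
      have h4 : (b:ℝ) ≤ t := hz2t ▸ hz2.1
      linarith
  · rintro ⟨p, q, hp0, hpq, hq1, hmin0, huniq, hpalt, hqalt⟩
    have hnn : ∀ u ∈ Icc (p:ℝ) (q:ℝ), 0 ≤ g u := fun u hu =>
      hmin0 ▸ minOn_le_val hg.continuousOn hpq.le hu
    obtain ⟨t, htm, htv, -⟩ := exists_minOn hg.continuousOn hpq.le
    have hgt : g t = 0 := htv.trans hmin0
    have huz : ∀ s ∈ Icc (p:ℝ) (q:ℝ), g s = 0 → s = t := by
      intro s hs hgs
      by_contra hne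
      have h2z : ∃ t1 ∈ Icc (p:ℝ) (q:ℝ), ∃ t2 ∈ Icc (p:ℝ) (q:ℝ), t1 < t2 ∧ g t1 = 0 ∧ g t2 = 0 := by
        rcases lt_or_gt_of_ne hne with h | h
        · exact ⟨s, hs, t, htm, h, hgs, hgt⟩
        · exact ⟨t, htm, s, hs, h, hgt, hgs⟩
      obtain ⟨A, B, hA, hAB, hB, hm1, hm2⟩ := (two_zeros_iff hg hpq.le hnn).1 h2z
      exact huniq A B hA hAB hB ⟨hm1, hm2⟩
    have hppos : (p:ℝ) = 0 ∨ (p:ℝ) < t := by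
      rcases hpalt with h | h
      · exact Or.inl h
      · refine Or.inr (lt_of_le_of_ne htm.1 fun he => ?_)
        rw [he, hgt] at h; exact lt_irrefl 0 h
    have hqpos : (q:ℝ) = 1 ∨ t < (q:ℝ) := by
      rcases hqalt with h | h
      · exact Or.inl h
      · refine Or.inr (lt_of_le_of_ne htm.2 fun he => ?_)
        rw [← he, hgt] at h; exact lt_irrefl 0 h
    set δ := min (if (p:ℝ) = 0 then 1 else t - p) (if (q:ℝ) = 1 then 1 else (q:ℝ) - t) with hδdef
    have hδpos : 0 < δ := by
      apply lt_min
      · split_ifs with h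
        · norm_num
        · rcases hppos with h0 | h'
          · exact absurd h0 h
          · linarith
      · split_ifs with h
        · norm_num
        · rcases hqpos with h0 | h'
          · exact absurd h0 h
          · linarith
    refine ⟨t, ⟨hp0.trans htm.1, htm.2.trans hq1⟩, hgt, δ, hδpos, ?_⟩
    intro s hs hne hd
    have habs := abs_lt.1 hd
    have hsp : (p:ℝ) ≤ s := by
      by_cases h : (p:ℝ) = 0
      · rw [h]; exact hs.1
      · have h1 : δ ≤ t - p := le_trans (min_le_left _ _) (by rw [if_neg h])
        linarith [habs.1]
    have hsq : s ≤ (q:ℝ) := by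
      by_cases h : (q:ℝ) = 1
      · rw [h]; exact hs.2
      · have h1 : δ ≤ (q:ℝ) - t := le_trans (min_le_right _ _) (by rw [if_neg h])
        linarith [habs.2]
    rcases (hnn s ⟨hsp, hsq⟩).lt_or_eq with h | h
    · rw [hgt]; exact h
    · exact absurd (huz s ⟨hsp, hsq⟩ h.symm) hne

section supmeas
variable {α : Type*} [MeasurableSpace α]

lemma measurable_maxOn_aux {F : α → ℝ → ℝ} {a b : ℝ} (hab : a ≤ b)
    (hFc : ∀ w, ContinuousOn (F w) (Icc a b))
    (hFm : ∀ r, r ∈ Icc a b → Measurable fun w => F w r) :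
    Measurable fun w => maxOnIcc (F w) a b := by
  set u : ℕ → ℚ := fun n => (Denumerable.eqv ℚ).symm n with hu
  have husurj : Function.Surjective u := (Denumerable.eqv ℚ).symm.surjective
  set r : ℕ → ℝ := fun n => max a (min b ((u n : ℚ) : ℝ)) with hrdef
  have hr : ∀ n, r n ∈ Icc a b := fun n => ⟨le_max_left _ _, max_le hab (min_le_left _ _)⟩
  have hne : ∀ n : ℕ, (Finset.range (n+1)).Nonempty := fun n => ⟨0, Finset.mem_range.2 (Nat.succ_pos n)⟩
  set P : ℕ → α → ℝ := fun n => (Finset.range (n+1)).sup' (hne n) (fun i => fun w => F w (r i))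
    with hPdef
  have hPapp : ∀ n w, P n w = (Finset.range (n+1)).sup' (hne n) (fun i => F w (r i)) := by
    intro n w; rw [hPdef]; exact Finset.sup'_apply _ _ _
  have hPm : ∀ n, Measurable (P n) :=
    fun n => Finset.measurable_sup' (hne n) (fun i _ => hFm (r i) (hr i))
  have key : ∀ w, Tendsto (fun n => P n w) atTop (𝓝 (maxOnIcc (F w) a b)) := by
    intro w
    obtain ⟨x, hx, hfx, hxmax⟩ := exists_maxOn (hFc w) hab
    rw [Metric.tendsto_atTop]
    intro ε hε
    have hcx : ContinuousWithinAt (F w) (Icc a b) x := (hFc w) x hx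
    rw [Metric.continuousWithinAt_iff] at hcx
    obtain ⟨δ, hδ, hδ2⟩ := hcx ε hε
    obtain ⟨s, hs1, hs2⟩ := exists_rat_btwn (show x - δ < x by linarith)
    obtain ⟨n0, hn0⟩ := husurj s
    have hsb : ((s:ℚ):ℝ) ≤ b := hs2.le.trans hx.2
    have hclose : |r n0 - x| < δ := by
      rw [hrdef]
      simp only [hn0]
      rw [min_eq_right hsb]
      rcases le_or_gt a ((s:ℚ):ℝ) with h | h
      · rw [max_eq_right h, abs_lt]; constructor <;> linarith
      · rw [max_eq_left h.le, abs_lt]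
        constructor
        · linarith [hx.1]
        · linarith [hx.1, hδ]
    have hd := hδ2 (hr n0) (by rw [Real.dist_eq]; exact hclose)
    rw [Real.dist_eq] at hd
    have hd' := abs_lt.1 hd
    have hval : maxOnIcc (F w) a b - ε < F w (r n0) := by
      have : F w x = maxOnIcc (F w) a b := hfx
      linarith [hd'.1]
    refine ⟨n0, fun m hm => ?_⟩
    have hub : P m w ≤ maxOnIcc (F w) a b := by
      rw [hPapp]
      exact Finset.sup'_le _ _ fun i _ => le_maxOn (hFc w) hab (hr i)
    have hlb : F w (r n0) ≤ P m w := by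
      rw [hPapp]
      exact Finset.le_sup' (fun i => F w (r i)) (Finset.mem_range.2 (Nat.lt_succ_of_le hm))
    rw [Real.dist_eq, abs_lt]
    constructor <;> linarith
  exact measurable_of_tendsto_metrizable hPm (tendsto_pi_nhds.2 key)

lemma measurable_minOn_aux {F : α → ℝ → ℝ} {a b : ℝ} (hab : a ≤ b)
    (hFc : ∀ w, ContinuousOn (F w) (Icc a b))
    (hFm : ∀ r, r ∈ Icc a b → Measurable fun w => F w r) :
    Measurable fun w => minOnIcc (F w) a b := by
  have hneg : ∀ w, minOnIcc (F w) a b = - maxOnIcc (fun t => -(F w t)) a b := by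
    intro w
    obtain ⟨x, hx, hfx, hxmax⟩ := exists_minOn (hFc w) hab
    have h1 : maxOnIcc (fun t => -(F w t)) a b = -(F w x) := by
      refine le_antisymm (maxOn_le hab fun z hz => neg_le_neg (hxmax z hz)) ?_
      exact le_maxOn (((hFc w).neg)) hab hx
    rw [h1, ← hfx, neg_neg]
  have : Measurable fun w => maxOnIcc (fun t => -(F w t)) a b :=
    measurable_maxOn_aux hab (fun w => (hFc w).neg) (fun r hr => (hFm r hr).neg)
  have h2 : (fun w => minOnIcc (F w) a b) = fun w => - maxOnIcc (fun t => -(F w t)) a b := funext hneg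
  rw [h2]
  exact this.neg

end supmeas

section xmeas

lemma Ameander_closed : IsClosed {w : XX | IsMeander 1 (ex w)} := by
  have heq : {w : XX | IsMeander 1 (ex w)} =
      {w : XX | ex w 0 = 0} ∩ ⋂ (s : ℝ) (_ : s ∈ Icc (0:ℝ) 1), {w : XX | ex w s ≤ ex w 1} := by
    ext w
    simp only [Set.mem_setOf_eq, Set.mem_inter_iff, Set.mem_iInter]
    constructor
    · exact fun h => ⟨h.2.1, fun s hs => h.2.2 s hs⟩
    · exact fun h => ⟨(ex_cont w).continuousOn, h.1, h.2⟩
  rw [heq]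
  exact (isClosed_eq (cont_ex_eval 0) continuous_const).inter
    (isClosed_iInter fun s => isClosed_iInter fun _ => isClosed_le (cont_ex_eval s) (cont_ex_eval 1))

open Classical in
noncomputable def mgam : XX → ℝ := fun w =>
  if IsMeander 1 (ex w) then gammaHalf 1 (ex w) else 0

lemma mgam_nonneg (w : XX) : 0 ≤ mgam w := by
  unfold mgam; split_ifs with hw
  · exact (gamma_mem (ex_cont w) hw.2.1 hw.2.2).1.1
  · exact le_refl 0

lemma mgam_le_one (w : XX) : mgam w ≤ 1 := by
  unfold mgam; split_ifs with hw
  · exact (gamma_mem (ex_cont w) hw.2.1 hw.2.2).1.2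
  · exact zero_le_one

variable [MeasurableSpace XX] [BorelSpace XX]

lemma measurable_mgam : Measurable mgam := by
  apply measurable_of_Iic
  intro c
  rcases lt_or_ge c 0 with hc0 | hc0
  · have : mgam ⁻¹' Iic c = ∅ := by
      ext w
      simp only [Set.mem_preimage, Set.mem_Iic, Set.mem_empty_iff_false, iff_false, not_le]
      exact lt_of_lt_of_le hc0 (mgam_nonneg w)
    rw [this]; exact MeasurableSet.empty
  rcases le_or_gt 1 c with hc1 | hc1
  · have : mgam ⁻¹' Iic c = univ := by
      ext w
      simp only [Set.mem_preimage, Set.mem_Iic, Set.mem_univ, iff_true]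
      exact (mgam_le_one w).trans hc1
    rw [this]; exact MeasurableSet.univ
  · have : mgam ⁻¹' Iic c = {w : XX | IsMeander 1 (ex w)}ᶜ ∪
        ({w : XX | IsMeander 1 (ex w)} ∩ {w : XX | ex w 1 / 2 ≤ maxOnIcc (ex w) 0 c}) := by
      ext w
      simp only [Set.mem_preimage, Set.mem_Iic, Set.mem_union, Set.mem_compl_iff,
        Set.mem_inter_iff, Set.mem_setOf_eq]
      by_cases hw : IsMeander 1 (ex w)
      · simp only [hw, not_true_eq_false, false_or, true_and, mgam, if_pos hw]
        exact gamma_le_iff (ex_cont w) hw.2.1 hw.2.2 ⟨hc0, hc1.le⟩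
      · simp only [hw, not_false_eq_true, true_or, iff_true, mgam, if_neg hw]
        exact hc0
    rw [this]
    refine (Ameander_closed.measurableSet.compl).union (Ameander_closed.measurableSet.inter ?_)
    exact measurableSet_le ((cont_ex_eval 1).measurable.div_const 2)
      (measurable_maxOn_aux hc0 (fun w => (ex_cont w).continuousOn)
        (fun r _ => (cont_ex_eval r).measurable))

end xmeas

section xmeas2

open Classical in
noncomputable def gv (r : ℝ) : XX → ℝ := fun w =>
  if r ≤ mgam w then ex w r else ex w (1 + mgam w - r) - ex w (mgam w)

lemma gv_eq {w : XX} (hw : IsMeander 1 (ex w)) (r : ℝ) : gv r w = Tbr 1 (ex w) r := by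
  simp only [gv, Tbr, mgam, if_pos hw]

open Classical in
noncomputable def MxA (a b : ℝ) : XX → ℝ := fun w =>
  if IsMeander 1 (ex w) then maxOnIcc (Tbr 1 (ex w)) a b else 0

open Classical in
noncomputable def MnA (a b : ℝ) : XX → ℝ := fun w =>
  if IsMeander 1 (ex w) then minOnIcc (Tbr 1 (ex w)) a b else 0

lemma MxA_eq {w : XX} (hw : IsMeander 1 (ex w)) (a b : ℝ) :
    MxA a b w = maxOnIcc (Tbr 1 (ex w)) a b := by simp only [MxA, if_pos hw]

lemma MnA_eq {w : XX} (hw : IsMeander 1 (ex w)) (a b : ℝ) :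
    MnA a b w = minOnIcc (Tbr 1 (ex w)) a b := by simp only [MnA, if_pos hw]

variable [MeasurableSpace XX] [BorelSpace XX]

lemma measurable_gv (r : ℝ) : Measurable (gv r) := by
  have hset : MeasurableSet {w : XX | r ≤ mgam w} :=
    measurableSet_le measurable_const measurable_mgam
  refine Measurable.ite hset ((cont_ex_eval r).measurable) ?_
  have h1 : Measurable fun w : XX => ex w (1 + mgam w - r) :=
    cont_ex_pair.measurable.comp (measurable_id.prodMk
      ((measurable_const.add measurable_mgam).sub measurable_const))
  have h2 : Measurable fun w : XX => ex w (mgam w) :=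
    cont_ex_pair.measurable.comp (measurable_id.prodMk measurable_mgam)
  exact h1.sub h2

lemma Tbr_cont_of_meander {w : XX} (hw : IsMeander 1 (ex w)) : Continuous (Tbr 1 (ex w)) :=
  Tbr_cont (ex_cont w) hw.2.1 hw.2.2

open Classical in
noncomputable def FF (w : XX) : ℝ → ℝ := fun r => if IsMeander 1 (ex w) then Tbr 1 (ex w) r else 0

lemma FF_pos {w : XX} (hw : IsMeander 1 (ex w)) : FF w = Tbr 1 (ex w) := by
  funext r; simp only [FF, if_pos hw]

lemma FF_neg {w : XX} (hw : ¬ IsMeander 1 (ex w)) : FF w = fun _ => (0:ℝ) := by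
  funext r; simp only [FF, if_neg hw]

private lemma FF_prop (a b : ℝ) (hab : a ≤ b) :
    (∀ w : XX, ContinuousOn (FF w) (Icc a b)) ∧
    (∀ r : ℝ, r ∈ Icc a b → Measurable fun w : XX => FF w r) := by
  classical
  constructor
  · intro w
    by_cases hw : IsMeander 1 (ex w)
    · rw [FF_pos hw]
      exact (Tbr_cont_of_meander hw).continuousOn
    · rw [FF_neg hw]
      exact continuousOn_const
  · intro r _
    have heq : (fun w : XX => FF w r) = fun w : XX =>
        if IsMeander 1 (ex w) then gv r w else 0 := by
      funext w
      by_cases hw : IsMeander 1 (ex w)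
      · rw [FF_pos hw, gv_eq hw, if_pos hw]
      · rw [FF_neg hw, if_neg hw]
    rw [heq]
    exact Measurable.ite Ameander_closed.measurableSet (measurable_gv r) measurable_const

lemma measurable_MxA {a b : ℝ} (hab : a ≤ b) : Measurable (MxA a b) := by
  obtain ⟨hFc, hFm⟩ := FF_prop a b hab
  have heq : MxA a b = fun w : XX => maxOnIcc (FF w) a b := by
    funext w
    by_cases hw : IsMeander 1 (ex w)
    · rw [MxA_eq hw, FF_pos hw]
    · rw [FF_neg hw]
      simp only [MxA, if_neg hw]
      rw [maxOnIcc, Set.Nonempty.image_const (nonempty_Icc.2 hab) 0, csSup_singleton]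
  rw [heq]
  exact measurable_maxOn_aux hab hFc hFm

lemma measurable_MnA {a b : ℝ} (hab : a ≤ b) : Measurable (MnA a b) := by
  obtain ⟨hFc, hFm⟩ := FF_prop a b hab
  have heq : MnA a b = fun w : XX => minOnIcc (FF w) a b := by
    funext w
    by_cases hw : IsMeander 1 (ex w)
    · rw [MnA_eq hw, FF_pos hw]
    · rw [FF_neg hw]
      simp only [MnA, if_neg hw]
      rw [minOnIcc, Set.Nonempty.image_const (nonempty_Icc.2 hab) 0, csInf_singleton]
  rw [heq]
  exact measurable_minOn_aux hab hFc hFm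

lemma measSet_eq_MxA {a b c d : ℝ} (h1 : a ≤ b) (h2 : c ≤ d) :
    MeasurableSet {w : XX | MxA a b w = MxA c d w} :=
  measurableSet_eq_fun (measurable_MxA h1) (measurable_MxA h2)

lemma measSet_MnA_zero {a b : ℝ} (h : a ≤ b) : MeasurableSet {w : XX | MnA a b w = 0} :=
  measurableSet_eq_fun (measurable_MnA h) measurable_const

end xmeas2

section helpers
variable {α : Type*} [MeasurableSpace α]

lemma measSet_imp {P : Prop} {Q : α → Prop} (h : P → MeasurableSet {w | Q w}) :
    MeasurableSet {w : α | P → Q w} := by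
  by_cases hP : P
  · have : {w : α | P → Q w} = {w | Q w} := by ext w; simp [hP]
    rw [this]; exact h hP
  · have : {w : α | P → Q w} = univ := by ext w; simp [hP]
    rw [this]; exact MeasurableSet.univ

lemma measSet_and_prop {P : Prop} {Q : α → Prop} (h : P → MeasurableSet {w | Q w}) :
    MeasurableSet {w : α | P ∧ Q w} := by
  by_cases hP : P
  · have : {w : α | P ∧ Q w} = {w | Q w} := by ext w; simp [hP]
    rw [this]; exact h hP
  · have : {w : α | P ∧ Q w} = ∅ := by ext w; simp [hP]
    rw [this]; exact MeasurableSet.empty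

lemma measSet_or_prop {P : Prop} {Q : α → Prop} (h : MeasurableSet {w : α | Q w}) :
    MeasurableSet {w : α | P ∨ Q w} := by
  by_cases hP : P
  · have : {w : α | P ∨ Q w} = univ := by ext w; simp [hP]
    rw [this]; exact MeasurableSet.univ
  · have : {w : α | P ∨ Q w} = {w | Q w} := by ext w; simp [hP]
    rw [this]; exact h

lemma measSet_forall_rat {Q : ℚ → α → Prop} (h : ∀ i, MeasurableSet {w | Q i w}) :
    MeasurableSet {w : α | ∀ i, Q i w} := by
  have : {w : α | ∀ i, Q i w} = ⋂ i, {w | Q i w} := by ext w; simp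
  rw [this]; exact MeasurableSet.iInter h

lemma measSet_not_and {Q1 Q2 : α → Prop} (h1 : MeasurableSet {w | Q1 w})
    (h2 : MeasurableSet {w | Q2 w}) : MeasurableSet {w : α | ¬(Q1 w ∧ Q2 w)} := by
  have : {w : α | ¬(Q1 w ∧ Q2 w)} = ({w | Q1 w} ∩ {w | Q2 w})ᶜ := by
    ext w; simp [Set.mem_inter_iff, not_and]
  rw [this]; exact (h1.inter h2).compl

lemma measSet_and2 {Q1 Q2 : α → Prop} (h1 : MeasurableSet {w | Q1 w})
    (h2 : MeasurableSet {w | Q2 w}) : MeasurableSet {w : α | Q1 w ∧ Q2 w} := by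
  have : {w : α | Q1 w ∧ Q2 w} = {w | Q1 w} ∩ {w | Q2 w} := rfl
  rw [this]; exact h1.inter h2

end helpers

/-- `M^reg_1` is a Borel subset of `C([0,1],ℝ)`. -/
theorem stmt11 :
    MeasurableSet[borel C(Set.Icc (0:ℝ) 1, ℝ)]
      {w : C(Set.Icc (0:ℝ) 1, ℝ) | IsMeander 1 (Set.IccExtend zero_le_one ⇑w) ∧
        Regular (Tbr 1 (Set.IccExtend zero_le_one ⇑w))} := by
  letI : MeasurableSpace XX := borel XX
  haveI : BorelSpace XX := ⟨rfl⟩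
  classical
  have hSeq : {w : XX | IsMeander 1 (Set.IccExtend zero_le_one ⇑w) ∧
      Regular (Tbr 1 (Set.IccExtend zero_le_one ⇑w))} =
      {w : XX | IsMeander 1 (ex w)} ∩
      ((⋂ t : ℚ, {w : XX | (t:ℝ) ∈ Icc (0:ℝ) 1 →
        ((∀ p q : ℚ, 0 ≤ (p:ℝ) → (p:ℝ) < (q:ℝ) → (q:ℝ) ≤ (t:ℝ) →
          ¬(MxA 0 p w = MxA 0 t w ∧ MxA q t w = MxA 0 t w)) ∧
        (∀ p q : ℚ, (t:ℝ) ≤ (p:ℝ) → (p:ℝ) < (q:ℝ) → (q:ℝ) ≤ 1 →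
          ¬(MxA t p w = MxA t 1 w ∧ MxA q 1 w = MxA t 1 w)))}) ∩
      (⋃ p : ℚ, ⋃ q : ℚ, {w : XX | (0 ≤ (p:ℝ) ∧ (p:ℝ) < (q:ℝ) ∧ (q:ℝ) ≤ 1) ∧ (MnA p q w = 0 ∧
        (∀ a b : ℚ, (p:ℝ) ≤ (a:ℝ) → (a:ℝ) < (b:ℝ) → (b:ℝ) ≤ (q:ℝ) →
          ¬(MnA p a w = 0 ∧ MnA b q w = 0)) ∧
        ((p:ℝ) = 0 ∨ 0 < gv p w) ∧ ((q:ℝ) = 1 ∨ 0 < gv q w))})ᶜ) := by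
    ext w
    simp only [Set.mem_setOf_eq, Set.mem_inter_iff, Set.mem_iInter, Set.mem_compl_iff,
      Set.mem_iUnion, not_exists]
    constructor
    · rintro ⟨hw, hreg⟩
      have hg := Tbr_cont_of_meander hw
      obtain ⟨hbr, huni, hnsm⟩ : IsBridge 1 (Tbr 1 (ex w)) ∧ UniqueOneSidedMax (Tbr 1 (ex w)) ∧
          NoStrictLocalMinAtZero (Tbr 1 (ex w)) := hreg
      refine ⟨hw, fun t ht => ?_, fun p q hcc => ?_⟩
      · obtain ⟨h1, h2⟩ := huni t ht
        constructor
        · intro p q hp hpq hqt hcon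
          refine (uniqueMax_iff hg ht.1).1 h1 p q hp hpq hqt ?_
          simpa only [MxA_eq hw] using hcon
        · intro p q hp hpq hqt hcon
          refine (uniqueMax_iff hg ht.2).1 h2 p q hp hpq hqt ?_
          simpa only [MxA_eq hw] using hcon
      · obtain ⟨⟨hp0, hpq, hq1⟩, hmn0, hun, hpa, hqa⟩ := hcc
        refine hnsm ((exists_strictMin_iff hg).2 ⟨p, q, hp0, hpq, hq1, ?_, ?_, ?_, ?_⟩)
        · simpa only [MnA_eq hw] using hmn0
        · intro a b ha hab hb hcon
          exact hun a b ha hab hb (by simpa only [MnA_eq hw] using hcon)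
        · simpa only [gv_eq hw] using hpa
        · simpa only [gv_eq hw] using hqa
    · rintro ⟨hw, hall, hcc⟩
      have hg := Tbr_cont_of_meander hw
      refine ⟨hw, ?_⟩
      have hbr : IsBridge 1 (Tbr 1 (ex w)) :=
        ⟨hg.continuousOn, Tbr_zero (ex_cont w) hw.2.1 hw.2.2, Tbr_one (ex_cont w) hw.2.1 hw.2.2⟩
      have huni : UniqueOneSidedMax (Tbr 1 (ex w)) := by
        intro t ht
        obtain ⟨h1, h2⟩ := hall t ht
        constructor
        · refine (uniqueMax_iff hg ht.1).2 ?_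
          intro p q hp hpq hqt hcon
          exact h1 p q hp hpq hqt (by simpa only [MxA_eq hw] using hcon)
        · refine (uniqueMax_iff hg ht.2).2 ?_
          intro p q hp hpq hqt hcon
          exact h2 p q hp hpq hqt (by simpa only [MxA_eq hw] using hcon)
      have hnsm : NoStrictLocalMinAtZero (Tbr 1 (ex w)) := by
        intro hex
        obtain ⟨p, q, hp0, hpq, hq1, hmn0, hun, hpa, hqa⟩ := (exists_strictMin_iff hg).1 hex
        refine hcc p q ⟨⟨hp0, hpq, hq1⟩, ?_, ?_, ?_, ?_⟩
        · simpa only [MnA_eq hw] using hmn0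
        · intro a b ha hab hb hcon
          exact hun a b ha hab hb (by simpa only [MnA_eq hw] using hcon)
        · simpa only [gv_eq hw] using hpa
        · simpa only [gv_eq hw] using hqa
      exact ⟨hbr, huni, hnsm⟩
  rw [hSeq]
  refine (Ameander_closed.measurableSet).inter (MeasurableSet.inter ?_ (MeasurableSet.compl ?_))
  · refine MeasurableSet.iInter fun t => ?_
    refine measSet_imp fun ht => ?_
    refine measSet_and2 ?_ ?_
    · refine measSet_forall_rat fun p => measSet_forall_rat fun q => ?_
      refine measSet_imp fun hp => measSet_imp fun hpq => measSet_imp fun hqt => ?_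
      exact measSet_not_and (measurableSet_eq_fun (measurable_MxA hp) (measurable_MxA ht.1))
        (measurableSet_eq_fun (measurable_MxA hqt) (measurable_MxA ht.1))
    · refine measSet_forall_rat fun p => measSet_forall_rat fun q => ?_
      refine measSet_imp fun hp => measSet_imp fun hpq => measSet_imp fun hqt => ?_
      exact measSet_not_and
        (measurableSet_eq_fun (measurable_MxA hp) (measurable_MxA ht.2))
        (measurableSet_eq_fun (measurable_MxA hqt) (measurable_MxA ht.2))
  · refine MeasurableSet.iUnion fun p => MeasurableSet.iUnion fun q => ?_
    refine measSet_and_prop fun hG => ?_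
    obtain ⟨hp0, hpq, hq1⟩ := hG
    refine measSet_and2 ?_ (measSet_and2 ?_ (measSet_and2 ?_ ?_))
    · exact measurableSet_eq_fun (measurable_MnA hpq.le) measurable_const
    · refine measSet_forall_rat fun a => measSet_forall_rat fun b => ?_
      refine measSet_imp fun ha => measSet_imp fun hab => measSet_imp fun hb => ?_
      exact measSet_not_and
        (measurableSet_eq_fun (measurable_MnA ha) measurable_const)
        (measurableSet_eq_fun (measurable_MnA hb) measurable_const)
    · exact measSet_or_prop (measurableSet_lt measurable_const (measurable_gv _))
    · exact measSet_or_prop (measurableSet_lt measurable_const (measurable_gv _))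
end
end

section
/- For all x > 0 and λ > 0: ∫_0^∞ (1/(x√(2πs))) (1 − e^{−x²/(2s)}) e^{−λs} ds = (1 − e^{−x√(2λ)}) / (x√(2λ)). In particular, the Laplace transform of the function g_x at λ equals (1 − e^{−x√(2λ)})/(x√(2λ)). -/
open Set Filter MeasureTheory Topology UniformConvergence

noncomputable section

/-- the density `g_x`. -/
def gx (x s : ℝ) : ℝ :=
  if 0 < s then (1 / (x * Real.sqrt (2 * Real.pi * s))) * (1 - Real.exp (-x ^ 2 / (2 * s)))
  else 0

section myAux
open Real
set_option maxHeartbeats 1000000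



lemma sq_injOn : InjOn (fun t : ℝ => t ^ 2) (Ioi 0) := fun a ha b hb h => by
  simp only [] at h
  have : Real.sqrt (a ^ 2) = Real.sqrt (b ^ 2) := by rw [h]
  rwa [Real.sqrt_sq (le_of_lt (mem_Ioi.mp ha)), Real.sqrt_sq (le_of_lt (mem_Ioi.mp hb))] at this

lemma sq_img : (fun t : ℝ => t ^ 2) '' Ioi 0 = Ioi 0 := by
  ext s; constructor
  · rintro ⟨t, ht, rfl⟩; exact pow_pos (show (0:ℝ) < t from ht) 2
  · intro hs; exact ⟨Real.sqrt s, Real.sqrt_pos.2 hs, Real.sq_sqrt hs.le⟩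

lemma sq_deriv : ∀ t ∈ Ioi (0:ℝ), HasDerivWithinAt (fun t : ℝ => t ^ 2) (2 * t) (Ioi 0) t :=
  fun t _ => (hasDerivAt_pow 2 t).hasDerivWithinAt.congr_deriv (by ring)

-- substitution s = t^2 on Ioi 0
lemma subst_sq (g : ℝ → ℝ) :
    ∫ s in Ioi (0:ℝ), g s = ∫ t in Ioi (0:ℝ), 2 * t * g (t ^ 2) := by
  have := integral_image_eq_integral_abs_deriv_smul (f := fun t : ℝ => t ^ 2)
    (f' := fun t => 2 * t) measurableSet_Ioi sq_deriv sq_injOn g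
  rw [sq_img] at this
  rw [this]
  refine setIntegral_congr_fun measurableSet_Ioi (fun t ht => ?_)
  have ht' : (0:ℝ) < t := mem_Ioi.mp ht
  simp [abs_of_pos (show (0:ℝ) < 2 * t by positivity), smul_eq_mul]

lemma integrableOn_sq_iff (g : ℝ → ℝ) :
    IntegrableOn g (Ioi (0:ℝ)) ↔ IntegrableOn (fun t => 2 * t * g (t ^ 2)) (Ioi (0:ℝ)) := by
  have := integrableOn_image_iff_integrableOn_abs_deriv_smul (f := fun t : ℝ => t ^ 2)
    (f' := fun t => 2 * t) measurableSet_Ioi sq_deriv sq_injOn g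
  rw [sq_img] at this
  rw [this]
  exact integrableOn_congr_fun (fun t ht => by
    have ht' : (0:ℝ) < t := mem_Ioi.mp ht
    simp [abs_of_pos (show (0:ℝ) < 2 * t by positivity), smul_eq_mul]) measurableSet_Ioi

lemma subst_inv (g : ℝ → ℝ) {c : ℝ} (hc : 0 < c) :
    ∫ t in Ioi (0:ℝ), g t = ∫ s in Ioi (0:ℝ), c / s ^ 2 * g (c / s) := by
  have himg : (fun s : ℝ => c / s) '' Ioi 0 = Ioi 0 := by
    ext t; constructor
    · rintro ⟨s, hs, rfl⟩; exact div_pos hc hs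
    · intro ht; exact ⟨c / t, div_pos hc ht, by field_simp⟩
  have hinj : InjOn (fun s : ℝ => c / s) (Ioi 0) := fun a ha b hb h => by
    simp only [] at h
    have ha' := mem_Ioi.mp ha; have hb' := mem_Ioi.mp hb
    field_simp at h
    exact h.symm
  have := integral_image_eq_integral_abs_deriv_smul (f := fun s : ℝ => c / s)
    (f' := fun s => -(c / s ^ 2)) measurableSet_Ioi
    (fun s hs => (((hasDerivAt_const s c).div (hasDerivAt_id s)
      (ne_of_gt (mem_Ioi.mp hs))).hasDerivWithinAt).congr_deriv (by simp only [id]; ring))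
    hinj g
  rw [himg] at this
  rw [this]
  refine setIntegral_congr_fun measurableSet_Ioi (fun s hs => ?_)
  have hs' := mem_Ioi.mp hs
  rw [abs_neg, abs_of_pos (by positivity), smul_eq_mul]



lemma glasser_surj (ha : 0 < a) (hb : 0 < b) (y : ℝ) :
    ∃ t ∈ Ioi (0:ℝ), Real.sqrt b * t - Real.sqrt a / t = y := by
  set D := Real.sqrt (y ^ 2 + 4 * (Real.sqrt a * Real.sqrt b)) with hD
  have hab : 0 < Real.sqrt a * Real.sqrt b := by positivity
  have hD2 : D ^ 2 = y ^ 2 + 4 * (Real.sqrt a * Real.sqrt b) :=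
    Real.sq_sqrt (by positivity)
  have hDgt : |y| < D := by
    rw [← Real.sqrt_sq_eq_abs]
    exact Real.sqrt_lt_sqrt (sq_nonneg y) (by linarith)
  have hyD : 0 < y + D := by
    have := neg_abs_le y; linarith
  have hsb : (0:ℝ) < Real.sqrt b := Real.sqrt_pos.2 hb
  refine ⟨(y + D) / (2 * Real.sqrt b), div_pos hyD (by positivity), ?_⟩
  have ht0 : (y + D) / (2 * Real.sqrt b) ≠ 0 := ne_of_gt (div_pos hyD (by positivity))
  have hsb2 : Real.sqrt b ^ 2 = b := Real.sq_sqrt hb.le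
  field_simp
  nlinarith [hD2, hsb2]

lemma glasser (ha : 0 < a) (hb : 0 < b) :
    ∫ t in Ioi (0:ℝ), Real.exp (-(a / t ^ 2 + b * t ^ 2))
      = Real.sqrt (Real.pi / b) / 2 * Real.exp (-(2 * Real.sqrt (a * b))) := by
  set sa := Real.sqrt a
  set sb := Real.sqrt b
  have hsa : 0 < sa := Real.sqrt_pos.2 ha
  have hsb : 0 < sb := Real.sqrt_pos.2 hb
  have hsa2 : sa ^ 2 = a := Real.sq_sqrt ha.le
  have hsb2 : sb ^ 2 = b := Real.sq_sqrt hb.le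
  have hab : Real.sqrt (a * b) = sa * sb := Real.sqrt_mul ha.le b
  set f : ℝ → ℝ := fun t => sb * t - sa / t with hf
  set f' : ℝ → ℝ := fun t => sb + sa / t ^ 2 with hf'
  have hderiv : ∀ t ∈ Ioi (0:ℝ), HasDerivWithinAt f (f' t) (Ioi 0) t := by
    intro t ht
    have ht' : t ≠ 0 := ne_of_gt (mem_Ioi.mp ht)
    exact ((((hasDerivAt_id t).const_mul sb).sub
      (((hasDerivAt_const t sa).div (hasDerivAt_id t) ht'))).hasDerivWithinAt).congr_deriv
      (by simp only [hf', id]; field_simp; ring)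
  have hinj : InjOn f (Ioi 0) := by
    have : StrictMonoOn f (Ioi 0) := by
      intro s hs t ht hst
      have hs' := mem_Ioi.mp hs; have ht' := mem_Ioi.mp ht
      have h1 : sb * s < sb * t := by nlinarith
      have h2 : sa / t < sa / s := by
        apply div_lt_div_of_pos_left hsa hs' hst
      simp only [hf]; linarith
    exact this.injOn
  have himg : f '' Ioi 0 = univ := by
    refine eq_univ_of_forall (fun y => ?_)
    obtain ⟨t, ht, hty⟩ := glasser_surj ha hb y
    exact ⟨t, ht, hty⟩
  -- G and its properties
  set G : ℝ → ℝ := fun t => Real.exp (-(a / t ^ 2 + b * t ^ 2)) with hG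
  have hGmeas : AEStronglyMeasurable G (volume.restrict (Ioi 0)) := by
    apply Measurable.aestronglyMeasurable
    measurability
  have hGint : IntegrableOn G (Ioi 0) := by
    refine Integrable.mono' ((integrable_exp_neg_mul_sq hb).restrict) hGmeas ?_
    filter_upwards [ae_restrict_mem measurableSet_Ioi] with t ht
    rw [Real.norm_eq_abs, abs_of_pos (Real.exp_pos _)]
    apply Real.exp_le_exp.2
    have : 0 ≤ a / t ^ 2 := by positivity
    simp only [neg_add, neg_mul]; nlinarith
  -- symmetry substitution with c = sa / sb
  set c := sa / sb with hc
  have hcpos : 0 < c := div_pos hsa hsb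
  have hGsym : ∀ s ∈ Ioi (0:ℝ), G (c / s) = G s := by
    intro s hs
    have hs' : s ≠ 0 := ne_of_gt (mem_Ioi.mp hs)
    have hc' : c ≠ 0 := ne_of_gt hcpos
    simp only [hG]
    congr 1
    have hc2 : c ^ 2 = a / b := by rw [hc, div_pow, hsa2, hsb2]
    rw [div_pow, hc2]
    field_simp
    ring
  have hKint : IntegrableOn (fun t => c / t ^ 2 * G t) (Ioi 0) := by
    have hiff := integrableOn_image_iff_integrableOn_abs_deriv_smul (f := fun s : ℝ => c / s)
      (f' := fun s => -(c / s ^ 2)) measurableSet_Ioi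
      (fun s hs => (((hasDerivAt_const s c).div (hasDerivAt_id s)
        (ne_of_gt (mem_Ioi.mp hs))).hasDerivWithinAt).congr_deriv (by simp only [id]; ring))
      (fun p hp q hq h => by
        simp only [] at h
        have hp' := mem_Ioi.mp hp; have hq' := mem_Ioi.mp hq
        field_simp at h
        exact h.symm) G
    have himg2 : (fun s : ℝ => c / s) '' Ioi 0 = Ioi 0 := by
      ext t; constructor
      · rintro ⟨s, hs, rfl⟩; exact div_pos hcpos hs
      · intro ht; exact ⟨c / t, div_pos hcpos ht, by field_simp⟩
    rw [himg2] at hiff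
    have := hiff.mp hGint
    refine this.congr_fun (fun s hs => ?_) measurableSet_Ioi
    have hs' := mem_Ioi.mp hs
    beta_reduce
    rw [abs_neg, abs_of_pos (by positivity), smul_eq_mul, hGsym s hs]
  -- main computation
  have key : Real.sqrt Real.pi
      = ∫ t in Ioi (0:ℝ), |f' t| • Real.exp (-(f t) ^ 2) := by
    have h2 := integral_image_eq_integral_abs_deriv_smul measurableSet_Ioi hderiv hinj
      (fun u => Real.exp (-u ^ 2))
    rw [himg, MeasureTheory.setIntegral_univ] at h2
    rw [← h2]
    have h3 := integral_gaussian 1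
    simp only [neg_mul, one_mul, div_one] at h3
    exact h3.symm
  set I := ∫ t in Ioi (0:ℝ), G t with hI
  have key2 : ∫ t in Ioi (0:ℝ), |f' t| • Real.exp (-(f t) ^ 2)
      = Real.exp (2 * (sa * sb)) * (sb * I + sa / c * I) := by
    have heq : ∀ t ∈ Ioi (0:ℝ), |f' t| • Real.exp (-(f t) ^ 2)
        = Real.exp (2 * (sa * sb)) * (sb * G t + sa / c * (c / t ^ 2 * G t)) := by
      intro t ht
      have ht' := mem_Ioi.mp ht
      have hft : (f t) ^ 2 = b * t ^ 2 + a / t ^ 2 - 2 * (sa * sb) := by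
        simp only [hf]
        field_simp
        linear_combination (t ^ 2) ^ 2 * hsb2 + hsa2
      have hfpos : 0 < f' t := by simp only [hf']; positivity
      rw [abs_of_pos hfpos, smul_eq_mul, hft]
      have hcne : c ≠ 0 := ne_of_gt hcpos
      rw [show -(b * t ^ 2 + a / t ^ 2 - 2 * (sa * sb))
          = 2 * (sa * sb) + -(a / t ^ 2 + b * t ^ 2) by ring, Real.exp_add]
      simp only [hf', hG]
      field_simp
    rw [setIntegral_congr_fun measurableSet_Ioi heq]
    rw [integral_const_mul]
    congr 1
    rw [integral_add ((hGint.const_mul sb)) ((hKint.const_mul (sa / c)))]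
    rw [integral_const_mul, integral_const_mul]
    congr 1
    -- ∫ sa/c * (c/t² G t) = sa/c * ∫ c/t² G = sa/c * I  (by subst_inv and symmetry)
    have : ∫ t in Ioi (0:ℝ), c / t ^ 2 * G t = I := by
      have hs := subst_inv G hcpos
      rw [hI, hs]
      refine setIntegral_congr_fun measurableSet_Ioi (fun s hs' => ?_)
      rw [hGsym s hs']
    rw [this]
  have hsac : sa / c = sb := by rw [hc]; field_simp
  rw [key2, hsac] at key
  have hE := Real.exp_pos (2 * (sa * sb))
  show I = Real.sqrt (Real.pi / b) / 2 * Real.exp (-(2 * Real.sqrt (a * b)))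
  rw [hab, Real.sqrt_div Real.pi_pos.le, Real.exp_neg]
  show I = Real.sqrt Real.pi / sb / 2 * (Real.exp (2 * (sa * sb)))⁻¹
  field_simp
  ring_nf at key ⊢
  linear_combination -key

lemma glasser_integrable {a b : ℝ} (ha : 0 ≤ a) (hb : 0 < b) :
    IntegrableOn (fun t => Real.exp (-(a / t ^ 2 + b * t ^ 2))) (Ioi (0:ℝ)) := by
  have hmeas : AEStronglyMeasurable (fun t : ℝ => Real.exp (-(a / t ^ 2 + b * t ^ 2)))
      (volume.restrict (Ioi 0)) := by
    apply Measurable.aestronglyMeasurable; measurability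
  refine Integrable.mono' ((integrable_exp_neg_mul_sq hb).restrict) hmeas ?_
  filter_upwards [ae_restrict_mem measurableSet_Ioi] with t ht
  rw [Real.norm_eq_abs, abs_of_pos (Real.exp_pos _)]
  apply Real.exp_le_exp.2
  have h0 : 0 ≤ a / t ^ 2 := by positivity
  simp only [neg_add, neg_mul]; nlinarith

lemma my_laplace_main (x : ℝ) (hx : 0 < x) (l : ℝ) (hl : 0 < l) :
    (∫ s in Set.Ioi (0:ℝ),
        (1 / (x * Real.sqrt (2 * Real.pi * s))) * (1 - Real.exp (-x ^ 2 / (2 * s))) *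
          Real.exp (-(l * s)))
      = (1 - Real.exp (-(x * Real.sqrt (2 * l)))) / (x * Real.sqrt (2 * l)) := by
  have hpi := Real.pi_pos
  rw [subst_sq]
  have hcong : ∀ t ∈ Ioi (0:ℝ),
      2 * t * ((1 / (x * Real.sqrt (2 * Real.pi * t ^ 2))) *
        (1 - Real.exp (-x ^ 2 / (2 * t ^ 2))) * Real.exp (-(l * t ^ 2)))
      = 2 / (x * Real.sqrt (2 * Real.pi)) *
          (Real.exp (-(l * t ^ 2)) - Real.exp (-(x ^ 2 / 2 / t ^ 2 + l * t ^ 2))) := by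
    intro t ht
    have ht' := mem_Ioi.mp ht
    have hs : Real.sqrt (2 * Real.pi * t ^ 2) = Real.sqrt (2 * Real.pi) * t := by
      rw [Real.sqrt_mul (by positivity), Real.sqrt_sq ht'.le]
    rw [hs]
    have he : Real.exp (-x ^ 2 / (2 * t ^ 2)) * Real.exp (-(l * t ^ 2))
        = Real.exp (-(x ^ 2 / 2 / t ^ 2 + l * t ^ 2)) := by
      rw [← Real.exp_add]; congr 1; field_simp; ring
    have hsp : (0:ℝ) < Real.sqrt (2 * Real.pi) := Real.sqrt_pos.2 (by positivity)
    rw [← he]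
    field_simp
  rw [setIntegral_congr_fun measurableSet_Ioi hcong]
  rw [integral_const_mul]
  have hA : IntegrableOn (fun t : ℝ => Real.exp (-(l * t ^ 2))) (Ioi 0) := by
    have h0 : IntegrableOn (fun t : ℝ => Real.exp (-l * t ^ 2)) (Ioi 0) :=
      (integrable_exp_neg_mul_sq hl).integrableOn
    exact h0.congr_fun (fun t _ => by beta_reduce; rw [neg_mul]) measurableSet_Ioi
  have hB := glasser_integrable (le_of_lt (by positivity : (0:ℝ) < x ^ 2 / 2)) hl
  rw [integral_sub hA hB]
  have hgA : ∫ t in Ioi (0:ℝ), Real.exp (-(l * t ^ 2)) = Real.sqrt (Real.pi / l) / 2 := by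
    have := integral_gaussian_Ioi l
    simpa [neg_mul] using this
  have hgB := glasser (by positivity : (0:ℝ) < x ^ 2 / 2) hl
  rw [hgA, hgB]
  -- arithmetic
  have h5 : Real.sqrt (x ^ 2 / 2 * l) = x * Real.sqrt (2 * l) / 2 := by
    rw [show x ^ 2 / 2 * l = (x * Real.sqrt (2 * l) / 2) ^ 2 by
      rw [div_pow, mul_pow, Real.sq_sqrt (by positivity : (0:ℝ) ≤ 2 * l)]; ring]
    exact Real.sqrt_sq (by positivity)
  rw [h5]
  have hrel : Real.sqrt (Real.pi / l) * Real.sqrt (2 * l) = Real.sqrt (2 * Real.pi) := by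
    rw [← Real.sqrt_mul (by positivity)]
    congr 1; field_simp
  have hs2l : (0:ℝ) < Real.sqrt (2 * l) := Real.sqrt_pos.2 (by positivity)
  have hs2p : (0:ℝ) < Real.sqrt (2 * Real.pi) := Real.sqrt_pos.2 (by positivity)
  have hE : Real.exp (-(2 * (x * Real.sqrt (2 * l) / 2))) = Real.exp (-(x * Real.sqrt (2 * l))) := by
    congr 1; ring
  rw [hE]
  set E := Real.exp (-(x * Real.sqrt (2 * l)))
  have hP : (0:ℝ) < Real.sqrt (Real.pi / l) := Real.sqrt_pos.2 (by positivity)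
  rw [← hrel]
  field_simp

end myAux

/-- the Laplace transform of `g_x`. -/
theorem stmt18 (x : ℝ) (hx : 0 < x) (l : ℝ) (hl : 0 < l) :
    (∫ s in Set.Ioi (0:ℝ),
        (1 / (x * Real.sqrt (2 * Real.pi * s))) * (1 - Real.exp (-x ^ 2 / (2 * s))) *
          Real.exp (-(l * s)))
      = (1 - Real.exp (-(x * Real.sqrt (2 * l)))) / (x * Real.sqrt (2 * l)) ∧
    (∫ s in Set.Ioi (0:ℝ), gx x s * Real.exp (-(l * s)))
      = (1 - Real.exp (-(x * Real.sqrt (2 * l)))) / (x * Real.sqrt (2 * l)) := by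
  have h1 := my_laplace_main x hx l hl
  refine ⟨h1, ?_⟩
  rw [← h1]
  refine MeasureTheory.setIntegral_congr_fun measurableSet_Ioi (fun s hs => ?_)
  simp only [gx, if_pos (Set.mem_Ioi.mp hs)]
end
end

section
/- For every x > 0, the function g_x is a probability density on (0,∞): g_x(s) ≥ 0 for all s > 0 and ∫_0^∞ g_x(s) ds = 1. -/
open Set Filter MeasureTheory Topology UniformConvergence

noncomputable section

/-- `g_x` is a probability density on `(0,∞)`. -/
theorem stmt19 (x : ℝ) (hx : 0 < x) :
    (∀ s : ℝ, 0 < s → 0 ≤ gx x s) ∧ (∫ s in Set.Ioi (0:ℝ), gx x s) = 1 := by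
  have hπ : (0:ℝ) < Real.pi := Real.pi_pos
  have hsπ : (0:ℝ) < Real.sqrt Real.pi := Real.sqrt_pos.2 hπ
  have hnonneg : ∀ s : ℝ, 0 < s → 0 ≤ gx x s := by
    intro s hs
    rw [gx, if_pos hs]
    have h1 : Real.exp (-x ^ 2 / (2 * s)) ≤ 1 := by
      rw [Real.exp_le_one_iff, neg_div]
      exact neg_nonpos.2 (by positivity)
    have h2 : (0:ℝ) ≤ 1 / (x * Real.sqrt (2 * Real.pi * s)) := by positivity
    nlinarith
  refine ⟨hnonneg, ?_⟩
  set G : ℝ → ℝ := fun y => ∫ t in (0:ℝ)..y, Real.exp (-t ^ 2) with hGdef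
  have hcontexp : Continuous fun t : ℝ => Real.exp (-t ^ 2) := by
    exact Real.continuous_exp.comp (continuous_pow 2).neg
  have hGderiv : ∀ y : ℝ, HasDerivAt G (Real.exp (-y ^ 2)) y := fun y =>
    (hcontexp.integral_hasStrictDerivAt 0 y).hasDerivAt
  set F : ℝ → ℝ := fun s =>
    if 0 < s then
      Real.sqrt (2 * s) * (1 - Real.exp (-x ^ 2 / (2 * s))) / (x * Real.sqrt Real.pi)
        + (1 - 2 / Real.sqrt Real.pi * G (x * (Real.sqrt (2 * s))⁻¹))
    else 0 with hFdef
  have hderiv : ∀ s0 ∈ Ioi (0:ℝ), HasDerivAt F (gx x s0) s0 := by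
    intro s0 hs0
    rw [mem_Ioi] at hs0
    set r := Real.sqrt (2 * s0) with hrdef
    have hr : 0 < r := Real.sqrt_pos.2 (by positivity)
    have hr2 : r ^ 2 = 2 * s0 := Real.sq_sqrt (by positivity)
    have h2s : HasDerivAt (fun s : ℝ => 2 * s) 2 s0 := by
      simpa using (hasDerivAt_id s0).const_mul (2:ℝ)
    have hsq : HasDerivAt (fun s : ℝ => Real.sqrt (2 * s)) (1 / r) s0 := by
      have h := (Real.hasDerivAt_sqrt (show (2*s0) ≠ 0 by positivity)).comp s0 h2s
      refine h.congr_deriv (Eq.symm ?_)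
      rw [← hrdef]; field_simp
    have hu : HasDerivAt (fun s : ℝ => -x ^ 2 / (2 * s)) (x ^ 2 / (2 * s0 ^ 2)) s0 := by
      have h1 : HasDerivAt (fun s : ℝ => (2 * s)⁻¹) (-2 / (2 * s0) ^ 2) s0 :=
        h2s.inv (by positivity)
      have h2 := h1.const_mul (-x ^ 2)
      have heq : (fun s : ℝ => -x ^ 2 * (2 * s)⁻¹) = fun s : ℝ => -x ^ 2 / (2 * s) := by
        funext s; ring
      rw [heq] at h2
      refine h2.congr_deriv (Eq.symm ?_)
      field_simp
    have hexp := hu.exp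
    have hone : HasDerivAt (fun s : ℝ => 1 - Real.exp (-x ^ 2 / (2 * s)))
        (0 - Real.exp (-x ^ 2 / (2 * s0)) * (x ^ 2 / (2 * s0 ^ 2))) s0 :=
      (hasDerivAt_const s0 1).sub hexp
    have hterm1 := (hsq.mul hone).div_const (x * Real.sqrt Real.pi)
    have hvinv : HasDerivAt (fun s : ℝ => (Real.sqrt (2 * s))⁻¹) (-(1 / r) / r ^ 2) s0 :=
      hsq.inv (ne_of_gt hr)
    have hv := hvinv.const_mul x
    have hGv := (hGderiv (x * r⁻¹)).comp s0 hv
    have hterm2 := (hasDerivAt_const s0 (1:ℝ)).sub (hGv.const_mul (2 / Real.sqrt Real.pi))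
    have hFf := hterm1.add hterm2
    have hEq : (fun s => Real.sqrt (2 * s) * (1 - Real.exp (-x ^ 2 / (2 * s)))
        / (x * Real.sqrt Real.pi)
        + (1 - 2 / Real.sqrt Real.pi * G (x * (Real.sqrt (2 * s))⁻¹))) =ᶠ[𝓝 s0] F := by
      filter_upwards [Ioi_mem_nhds hs0] with s hs
      rw [hFdef]; simp only [if_pos (mem_Ioi.mp hs)]
    have hFder := hFf.congr_of_eventuallyEq hEq.symm
    refine hFder.congr_deriv (Eq.symm ?_)
    have hxr : (x * r⁻¹) ^ 2 = x ^ 2 / (2 * s0) := by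
      rw [mul_pow, inv_pow, hr2, div_eq_mul_inv]
    rw [gx, if_pos hs0, hxr]
    have hsqrt2pis : Real.sqrt (2 * Real.pi * s0) = Real.sqrt Real.pi * r := by
      rw [hrdef, ← Real.sqrt_mul (le_of_lt hπ)]
      ring_nf
    rw [hsqrt2pis]
    have hs0r : s0 = r ^ 2 / 2 := by linarith
    rw [hs0r]
    field_simp
    rw [Real.sqrt_sq hr.le]
    ring
  have hF0 : F 0 = 0 := by rw [hFdef]; simp
  have hGtop : Tendsto G atTop (𝓝 (Real.sqrt Real.pi / 2)) := by
    have hint : IntegrableOn (fun t : ℝ => Real.exp (-t ^ 2)) (Ioi 0) := by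
      have h := integrable_exp_neg_mul_sq (show (0:ℝ) < 1 by norm_num)
      simpa using h.integrableOn
    have h := intervalIntegral_tendsto_integral_Ioi 0 hint tendsto_id
    have hval : (∫ t in Ioi (0:ℝ), Real.exp (-t ^ 2)) = Real.sqrt Real.pi / 2 := by
      have := integral_gaussian_Ioi 1
      simpa using this
    rw [hval] at h
    exact h
  have hG0 : Tendsto G (𝓝 0) (𝓝 0) := by
    have h := (hGderiv 0).continuousAt
    have hG0v : G 0 = 0 := intervalIntegral.integral_same
    simpa [ContinuousAt, hG0v] using h
  -- limit at 0 from the right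
  have htzero : Tendsto F (𝓝[Ioi 0] (0:ℝ)) (𝓝 0) := by
    have hFeq : ∀ s ∈ Ioi (0:ℝ), F s =
        Real.sqrt (2 * s) * (1 - Real.exp (-x ^ 2 / (2 * s))) / (x * Real.sqrt Real.pi)
          + (1 - 2 / Real.sqrt Real.pi * G (x * (Real.sqrt (2 * s))⁻¹)) := by
      intro s hs; rw [hFdef]; simp only [if_pos (mem_Ioi.mp hs)]
    have hsqrt_tend : Tendsto (fun s : ℝ => Real.sqrt (2 * s)) (𝓝[Ioi 0] (0:ℝ)) (𝓝 0) := by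
      have h : Continuous fun s : ℝ => Real.sqrt (2 * s) :=
        Real.continuous_sqrt.comp (continuous_const.mul continuous_id)
      have := h.tendsto 0
      simp only [mul_zero, Real.sqrt_zero] at this
      exact this.mono_left nhdsWithin_le_nhds
    have ht1 : Tendsto (fun s : ℝ => Real.sqrt (2 * s) * (1 - Real.exp (-x ^ 2 / (2 * s)))
        / (x * Real.sqrt Real.pi)) (𝓝[Ioi 0] (0:ℝ)) (𝓝 0) := by
      apply squeeze_zero' ?_ ?_
        (show Tendsto (fun s : ℝ => Real.sqrt (2 * s) / (x * Real.sqrt Real.pi))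
          (𝓝[Ioi 0] (0:ℝ)) (𝓝 0) by
            simpa using hsqrt_tend.div_const (x * Real.sqrt Real.pi))
      · filter_upwards [self_mem_nhdsWithin] with s hs
        have hs' : (0:ℝ) < s := hs
        have h1 : Real.exp (-x ^ 2 / (2 * s)) ≤ 1 := by
          rw [Real.exp_le_one_iff, neg_div]
          exact neg_nonpos.2 (by positivity)
        have h2 : (0:ℝ) ≤ 1 - Real.exp (-x ^ 2 / (2 * s)) := by linarith
        positivity
      · filter_upwards [self_mem_nhdsWithin] with s hs
        have hs' : (0:ℝ) < s := hs
        have h1 : Real.exp (-x ^ 2 / (2 * s)) ≤ 1 := by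
          rw [Real.exp_le_one_iff, neg_div]
          exact neg_nonpos.2 (by positivity)
        have h0 : (0:ℝ) ≤ Real.exp (-x ^ 2 / (2 * s)) := Real.exp_nonneg _
        have hsq0 : (0:ℝ) ≤ Real.sqrt (2 * s) := Real.sqrt_nonneg _
        have hd : (0:ℝ) < x * Real.sqrt Real.pi := by positivity
        rw [div_le_div_iff_of_pos_right hd]
        nlinarith
    have hvtop : Tendsto (fun s : ℝ => x * (Real.sqrt (2 * s))⁻¹) (𝓝[Ioi 0] (0:ℝ)) atTop := by
      have h1 : Tendsto (fun s : ℝ => Real.sqrt (2 * s)) (𝓝[Ioi 0] (0:ℝ)) (𝓝[Ioi 0] 0) := by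
        rw [tendsto_nhdsWithin_iff]
        refine ⟨hsqrt_tend, ?_⟩
        filter_upwards [self_mem_nhdsWithin] with s hs
        have hs' : (0:ℝ) < s := hs
        exact mem_Ioi.mpr (Real.sqrt_pos.2 (by positivity))
      have h2 : Tendsto (fun s : ℝ => (Real.sqrt (2 * s))⁻¹) (𝓝[Ioi 0] (0:ℝ)) atTop :=
        tendsto_inv_nhdsGT_zero.comp h1
      exact h2.const_mul_atTop hx
    have ht2 : Tendsto (fun s : ℝ => 1 - 2 / Real.sqrt Real.pi
        * G (x * (Real.sqrt (2 * s))⁻¹)) (𝓝[Ioi 0] (0:ℝ)) (𝓝 0) := by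
      have h := (hGtop.comp hvtop).const_mul (2 / Real.sqrt Real.pi)
      have h2 := tendsto_const_nhds.sub h
        (α := ℝ) (f := fun _ : ℝ => (1:ℝ))
      have hval : (1:ℝ) - 2 / Real.sqrt Real.pi * (Real.sqrt Real.pi / 2) = 0 := by
        field_simp
        norm_num
      rw [hval] at h2
      exact h2
    have := ht1.add ht2
    rw [add_zero] at this
    exact this.congr' (by filter_upwards [self_mem_nhdsWithin] with s hs
      using (hFeq s hs).symm)
  have hcont : ContinuousWithinAt F (Ici (0:ℝ)) 0 := by
    have hsplit : Ici (0:ℝ) = {0} ∪ Ioi 0 := by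
      rw [Set.singleton_union, Set.Ioi_insert]
    rw [ContinuousWithinAt, hF0, hsplit, nhdsWithin_union, tendsto_sup]
    constructor
    · rw [nhdsWithin_singleton]
      simpa [hF0] using tendsto_pure_nhds F 0
    · exact htzero
  have htop : Tendsto F atTop (𝓝 1) := by
    have hsqrt_top : Tendsto (fun s : ℝ => Real.sqrt (2 * s)) atTop atTop := by
      apply tendsto_atTop_atTop.2
      intro b
      refine ⟨b ^ 2, fun a ha => ?_⟩
      rcases le_or_gt b 0 with hb | hb
      · exact hb.trans (Real.sqrt_nonneg _)
      · rw [show b = Real.sqrt (b ^ 2) from (Real.sqrt_sq hb.le).symm]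
        exact Real.sqrt_le_sqrt (by nlinarith)
    have hinv0 : Tendsto (fun s : ℝ => (Real.sqrt (2 * s))⁻¹) atTop (𝓝 0) :=
      tendsto_inv_atTop_zero.comp hsqrt_top
    have ht1 : Tendsto (fun s : ℝ => Real.sqrt (2 * s) * (1 - Real.exp (-x ^ 2 / (2 * s)))
        / (x * Real.sqrt Real.pi)) atTop (𝓝 0) := by
      apply squeeze_zero' ?_ ?_
        (show Tendsto (fun s : ℝ => x / Real.sqrt Real.pi * (Real.sqrt (2 * s))⁻¹)
          atTop (𝓝 0) by
            simpa using hinv0.const_mul (x / Real.sqrt Real.pi))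
      · filter_upwards [eventually_gt_atTop (0:ℝ)] with s hs
        have h1 : Real.exp (-x ^ 2 / (2 * s)) ≤ 1 := by
          rw [Real.exp_le_one_iff, neg_div]
          exact neg_nonpos.2 (by positivity)
        have h2 : (0:ℝ) ≤ 1 - Real.exp (-x ^ 2 / (2 * s)) := by linarith
        positivity
      · filter_upwards [eventually_gt_atTop (0:ℝ)] with s hs
        set r := Real.sqrt (2 * s) with hrdef
        have hr : 0 < r := Real.sqrt_pos.2 (by positivity)
        have hr2 : r ^ 2 = 2 * s := Real.sq_sqrt (by positivity)
        have h1E : 1 - Real.exp (-x ^ 2 / (2 * s)) ≤ x ^ 2 / (2 * s) := by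
          have := Real.add_one_le_exp (-x ^ 2 / (2 * s))
          have h2 : -(x ^ 2 / (2 * s)) + 1 ≤ Real.exp (-x ^ 2 / (2 * s)) := by
            rw [← neg_div]; linarith
          linarith
        have hE0 : (0:ℝ) ≤ Real.exp (-x ^ 2 / (2 * s)) := Real.exp_nonneg _
        calc r * (1 - Real.exp (-x ^ 2 / (2 * s))) / (x * Real.sqrt Real.pi)
            ≤ r * (x ^ 2 / (2 * s)) / (x * Real.sqrt Real.pi) := by
              gcongr
          _ = x / Real.sqrt Real.pi * r⁻¹ := by
              rw [← hr2]; field_simp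
    have hv0 : Tendsto (fun s : ℝ => x * (Real.sqrt (2 * s))⁻¹) atTop (𝓝 0) := by
      simpa using hinv0.const_mul x
    have ht2 : Tendsto (fun s : ℝ => 1 - 2 / Real.sqrt Real.pi
        * G (x * (Real.sqrt (2 * s))⁻¹)) atTop (𝓝 1) := by
      have h := ((hG0.comp hv0).const_mul (2 / Real.sqrt Real.pi))
      have h2 := tendsto_const_nhds.sub h (α := ℝ) (f := fun _ : ℝ => (1:ℝ))
      simpa using h2
    have hsum := ht1.add ht2
    rw [zero_add] at hsum
    apply hsum.congr'
    filter_upwards [eventually_gt_atTop (0:ℝ)] with s hs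
    rw [hFdef]; simp only [if_pos hs]
  have hkey := integral_Ioi_of_hasDerivAt_of_nonneg hcont hderiv
    (fun s hs => hnonneg s hs) htop
  rw [hkey, hF0, sub_zero]
end
end
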